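/- arXiv:1408.2206 — 6 statements merged into one kernel-verified Lean document; each statement's English description precedes it below -/
import Mathlib

section
/- Let α be a positive real quadratic irrational (i.e., α is irrational and satisfies a quadratic equation with rational coefficients), and let pₙ/qₙ denote the nth convergent of the regular continued fraction expansion of α. Then ∑_{n≥0} |qₙ·α − pₙ| belongs to ℚ[α]; that is, there exist rational numbers a and b such that ∑_{n≥0} |qₙ·α − pₙ| = a + b·α. -/
open Real

/-- The numerator `pₙ` of the `n`th convergent of the regular continued fraction of `α`. -/
noncomputable def cfNum (α : ℝ) (n : ℕ) : ℝ := (GenContFract.of α).nums n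

/-- The denominator `qₙ` of the `n`th convergent of the regular continued fraction of `α`. -/
noncomputable def cfDen (α : ℝ) (n : ℕ) : ℝ := (GenContFract.of α).dens n

set_option linter.unusedSectionVars false

open Real GenContFract

namespace CFAux

variable {v : ℝ}

lemma irr_fract (hv : Irrational v) : Irrational (Int.fract v) := by
  simpa [Int.fract, sub_eq_add_neg] using Irrational.sub_intCast hv ⌊v⌋

lemma fract_pos (hv : Irrational v) : 0 < Int.fract v :=
  lt_of_le_of_ne (Int.fract_nonneg v) (Ne.symm (irr_fract hv).ne_zero)

lemma irr_next (hv : Irrational v) : Irrational (Int.fract v)⁻¹ := (irr_fract hv).inv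

lemma one_lt_next (hv : Irrational v) : 1 < (Int.fract v)⁻¹ :=
  one_lt_inv₀ (fract_pos hv) |>.mpr (Int.fract_lt_one v)

lemma not_term (hv : Irrational v) (n : ℕ) : ¬ (GenContFract.of v).TerminatedAt n := by
  intro h
  have : (GenContFract.of v).Terminates := ⟨n, h⟩
  obtain ⟨q, rfl⟩ := (terminates_iff_rat v).mp this
  exact hv ⟨q, rfl⟩

lemma exists_s (hv : Irrational v) (n : ℕ) :
    ∃ b : ℝ, (GenContFract.of v).s.get? n = some ⟨1, b⟩ ∧ 1 ≤ b := by
  have h := not_term hv n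
  rw [terminatedAt_iff_s_none] at h
  obtain ⟨gp, hgp⟩ := Option.ne_none_iff_exists'.mp h
  have ha : gp.a = 1 := of_partNum_eq_one (partNum_eq_s_a hgp)
  have hb : 1 ≤ gp.b := of_one_le_get?_partDen (partDen_eq_s_b hgp)
  exact ⟨gp.b, by rwa [← ha], hb⟩

/-- Continuants shift lemma. -/
lemma contsAux_shift (hv : Irrational v) (n : ℕ) :
    (GenContFract.of v).contsAux (n + 1) =
      ⟨(⌊v⌋ : ℝ) * ((GenContFract.of (Int.fract v)⁻¹).contsAux n).a
          + ((GenContFract.of (Int.fract v)⁻¹).contsAux n).b,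
        ((GenContFract.of (Int.fract v)⁻¹).contsAux n).a⟩ := by
  induction n using Nat.twoStepInduction with
  | zero =>
    rw [first_contAux_eq_h_one, zeroth_contAux_eq_one_zero, of_h_eq_floor]
    simp
  | one =>
    have h0 : (GenContFract.of v).s.get? 0 = some ⟨1, (⌊(Int.fract v)⁻¹⌋ : ℝ)⟩ :=
      of_s_head (irr_fract hv).ne_zero
    rw [second_contAux_eq h0, first_contAux_eq_h_one, of_h_eq_floor, of_h_eq_floor]
    simp [mul_comm]
  | more n ih1 ih2 =>
    obtain ⟨b, hb, _⟩ := exists_s (irr_next hv) n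
    have hbv : (GenContFract.of v).s.get? (n + 1) = some ⟨1, b⟩ := by
      rw [of_s_succ]; exact hb
    rw [contsAux_recurrence hbv ih1 ih2,
      contsAux_recurrence hb rfl rfl]
    show GenContFract.Pair.mk _ _ = _
    simp only [GenContFract.Pair.mk.injEq]
    exact ⟨by ring, trivial⟩

end CFAux

namespace CFAux2
open CFAux

/-- error term -/
noncomputable def err (v : ℝ) (n : ℕ) : ℝ :=
  |(GenContFract.of v).dens n * v - (GenContFract.of v).nums n|

lemma err_nonneg (v : ℝ) (n : ℕ) : 0 ≤ err v n := abs_nonneg _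

lemma err_zero {v : ℝ} : err v 0 = Int.fract v := by
  rw [err, zeroth_den_eq_one, zeroth_num_eq_h, of_h_eq_floor, one_mul]
  rw [abs_of_nonneg]
  · rw [Int.fract]
  · rw [sub_nonneg]; exact Int.floor_le v

lemma err_succ {v : ℝ} (hv : Irrational v) (n : ℕ) :
    err v (n + 1) = Int.fract v * err (Int.fract v)⁻¹ n := by
  have hA := contsAux_shift hv (n + 1)
  set g' := GenContFract.of (Int.fract v)⁻¹
  have hnum : (GenContFract.of v).nums (n + 1)
      = (⌊v⌋ : ℝ) * g'.nums n + g'.dens n := by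
    rw [num_eq_conts_a, nth_cont_eq_succ_nth_contAux, hA]
    simp [num_eq_conts_a, den_eq_conts_b, nth_cont_eq_succ_nth_contAux]
  have hden : (GenContFract.of v).dens (n + 1) = g'.nums n := by
    rw [den_eq_conts_b, nth_cont_eq_succ_nth_contAux, hA]
    simp [num_eq_conts_a, nth_cont_eq_succ_nth_contAux]
  have hfr : Int.fract v * (Int.fract v)⁻¹ = 1 :=
    mul_inv_cancel₀ (irr_fract hv).ne_zero
  have key : (GenContFract.of v).dens (n + 1) * v - (GenContFract.of v).nums (n + 1)
      = - (Int.fract v * (g'.dens n * (Int.fract v)⁻¹ - g'.nums n)) := by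
    rw [hnum, hden]
    have hv' : v = (⌊v⌋ : ℝ) + Int.fract v := (Int.floor_add_fract v).symm
    calc g'.nums n * v - ((⌊v⌋ : ℝ) * g'.nums n + g'.dens n)
        = g'.nums n * (v - ⌊v⌋) - g'.dens n * (Int.fract v * (Int.fract v)⁻¹) := by
          rw [hfr]; ring
      _ = - (Int.fract v * (g'.dens n * (Int.fract v)⁻¹ - g'.nums n)) := by
          rw [Int.fract]; ring
  rw [err, err, key, abs_neg, abs_mul,
    abs_of_nonneg (Int.fract_nonneg v)]

/-- Two-step bound. -/
lemma err_two_step {v : ℝ} (hv : Irrational v) (n : ℕ) :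
    err v (n + 2) ≤ (1 / 2) * err ((Int.fract (Int.fract v)⁻¹)⁻¹) n := by
  have h1 : err v (n + 2) = Int.fract v * (Int.fract (Int.fract v)⁻¹ *
      err ((Int.fract (Int.fract v)⁻¹)⁻¹) n) := by
    rw [err_succ hv, err_succ (irr_next hv)]
  rw [h1, ← mul_assoc]
  have hkey : Int.fract v * Int.fract (Int.fract v)⁻¹ ≤ 1 / 2 := by
    set t := Int.fract v with ht
    have htpos : 0 < t := fract_pos hv
    have htlt : t < 1 := Int.fract_lt_one v
    have hfloor : (1 : ℤ) ≤ ⌊t⁻¹⌋ := by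
      rw [Int.le_floor]; exact_mod_cast (one_lt_next hv).le
    have hexp : t * Int.fract t⁻¹ = 1 - t * ⌊t⁻¹⌋ := by
      rw [Int.fract]
      field_simp
    rcases le_total t (1/2) with h | h
    · calc t * Int.fract t⁻¹ ≤ t * 1 :=
          mul_le_mul_of_nonneg_left (Int.fract_lt_one _).le htpos.le
        _ ≤ 1/2 := by linarith
    · rw [hexp]
      have : t * 1 ≤ t * (⌊t⁻¹⌋ : ℝ) := by
        apply mul_le_mul_of_nonneg_left _ htpos.le
        exact_mod_cast hfloor
      linarith
  exact mul_le_mul_of_nonneg_right hkey (err_nonneg _ _) |>.trans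
    (le_of_eq rfl)

lemma err_le_one {v : ℝ} (hv : Irrational v) (n : ℕ) : err v n ≤ 1 := by
  induction n using Nat.twoStepInduction generalizing v with
  | zero => rw [err_zero]; exact (Int.fract_lt_one v).le
  | one =>
    rw [err_succ hv, err_zero]
    calc Int.fract v * Int.fract (Int.fract v)⁻¹ ≤ 1 * 1 :=
          mul_le_mul (Int.fract_lt_one _).le (Int.fract_lt_one _).le
            (Int.fract_nonneg _) zero_le_one
      _ = 1 := one_mul 1
  | more n ih1 ih2 =>
    calc err v (n + 2) ≤ (1/2) * err ((Int.fract (Int.fract v)⁻¹)⁻¹) n := err_two_step hv n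
      _ ≤ (1/2) * 1 := by
          have := ih1 (irr_next (irr_next hv))
          linarith
      _ ≤ 1 := by norm_num

lemma err_le_pow {v : ℝ} (hv : Irrational v) (k : ℕ) :
    err v (2 * k) ≤ (1/2) ^ k ∧ err v (2 * k + 1) ≤ (1/2) ^ k := by
  induction k generalizing v with
  | zero => simpa using ⟨err_le_one hv 0, err_le_one hv 1⟩
  | succ k ih =>
    have hv'' := irr_next (irr_next hv)
    constructor
    · have h2 : 2 * (k + 1) = 2 * k + 2 := by ring
      rw [h2]
      calc err v (2 * k + 2) ≤ (1/2) * err _ (2*k) := err_two_step hv _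
        _ ≤ (1/2) * (1/2)^k := by have := (ih hv'').1; linarith
        _ = (1/2)^(k+1) := by ring
    · have h2 : 2 * (k + 1) + 1 = (2 * k + 1) + 2 := by ring
      rw [h2]
      calc err v ((2*k+1) + 2) ≤ (1/2) * err _ (2*k+1) := err_two_step hv _
        _ ≤ (1/2) * (1/2)^k := by have := (ih hv'').2; linarith
        _ = (1/2)^(k+1) := by ring

lemma summable_err {v : ℝ} (hv : Irrational v) : Summable (err v) := by
  apply Summable.even_add_odd
  · apply Summable.of_nonneg_of_le (fun k => err_nonneg v _) (fun k => (err_le_pow hv k).1)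
    exact summable_geometric_two
  · apply Summable.of_nonneg_of_le (fun k => err_nonneg v _) (fun k => (err_le_pow hv k).2)
    exact summable_geometric_two

/-- total error sum -/
noncomputable def E (v : ℝ) : ℝ := ∑' n, err v n

lemma E_rec {v : ℝ} (hv : Irrational v) :
    E v = Int.fract v * (1 + E (Int.fract v)⁻¹) := by
  rw [E, Summable.tsum_eq_zero_add (summable_err hv), err_zero]
  have : ∑' n : ℕ, err v (n + 1) = ∑' n : ℕ, Int.fract v * err (Int.fract v)⁻¹ n := by
    congr 1; ext n; exact err_succ hv n
  rw [this, tsum_mul_left, ← E]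
  ring

end CFAux2

namespace CFAux3

/-- membership in ℚ + ℚα -/
def memS (α x : ℝ) : Prop := ∃ a b : ℚ, x = (a : ℝ) + (b : ℝ) * α

variable {α : ℝ} {c₀ c₁ : ℚ}

lemma memS_rat (q : ℚ) : memS α q := ⟨q, 0, by simp⟩
lemma memS_self : memS α α := ⟨0, 1, by simp⟩
lemma memS_add {x y : ℝ} (hx : memS α x) (hy : memS α y) : memS α (x + y) := by
  obtain ⟨a, b, rfl⟩ := hx; obtain ⟨c, d, rfl⟩ := hy
  exact ⟨a + c, b + d, by push_cast; ring⟩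
lemma memS_neg {x : ℝ} (hx : memS α x) : memS α (-x) := by
  obtain ⟨a, b, rfl⟩ := hx; exact ⟨-a, -b, by push_cast; ring⟩
lemma memS_sub {x y : ℝ} (hx : memS α x) (hy : memS α y) : memS α (x - y) := by
  rw [sub_eq_add_neg]; exact memS_add hx (memS_neg hy)
lemma memS_intcast (m : ℤ) : memS α (m : ℝ) := by
  have := memS_rat (α := α) (m : ℚ); simpa using this
lemma memS_one : memS α 1 := by simpa using memS_intcast (α := α) 1

lemma memS_mul (hc : α ^ 2 = (c₀ : ℝ) + (c₁ : ℝ) * α) {x y : ℝ}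
    (hx : memS α x) (hy : memS α y) : memS α (x * y) := by
  obtain ⟨a, b, rfl⟩ := hx; obtain ⟨c, d, rfl⟩ := hy
  refine ⟨a * c + b * d * c₀, a * d + b * c + b * d * c₁, ?_⟩
  have : ((a : ℝ) + b * α) * (c + d * α)
      = a * c + (a * d + b * c) * α + (b * d) * α ^ 2 := by ring
  rw [this, hc]; push_cast; ring

lemma memS_inv (hirr : Irrational α) (hc : α ^ 2 = (c₀ : ℝ) + (c₁ : ℝ) * α)
    {x : ℝ} (hx : memS α x) : memS α x⁻¹ := by
  obtain ⟨a, b, rfl⟩ := hx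
  rcases eq_or_ne b 0 with rfl | hb
  · refine ⟨a⁻¹, 0, ?_⟩
    simp only [Rat.cast_zero, zero_mul, add_zero]
    rw [← Rat.cast_inv]
  · -- conjugate: (a + bα)(a + b c₁ - bα) = a² + a b c₁ - b² c₀ =: N
    set N : ℚ := a ^ 2 + a * b * c₁ - b ^ 2 * c₀ with hN
    have key : ((a : ℝ) + b * α) * ((a : ℝ) + b * c₁ - b * α) = (N : ℝ) := by
      have : ((a : ℝ) + b * α) * ((a : ℝ) + b * c₁ - b * α)
          = a^2 + a * b * c₁ - b^2 * α^2 + b^2*c₁*α := by ring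
      rw [this, hc, hN]; push_cast; ring
    have hconj : ((a : ℝ) + b * c₁ - b * α) ≠ 0 := by
      intro h
      apply hirr
      refine ⟨(a + b * c₁) / b, ?_⟩
      have hb' : (b : ℝ) ≠ 0 := by exact_mod_cast hb
      push_cast
      field_simp
      linarith [h]
    have hNne : (N : ℝ) ≠ 0 := by
      rw [← key]
      intro h
      rcases mul_eq_zero.mp h with h | h
      · -- a + bα = 0 ⇒ α rational
        apply hirr
        refine ⟨-a / b, ?_⟩
        have hb' : (b : ℝ) ≠ 0 := by exact_mod_cast hb
        push_cast
        field_simp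
        linarith [h]
      · exact hconj h
    refine ⟨(a + b * c₁) / N, -b / N, ?_⟩
    rw [eq_comm]
    apply eq_inv_of_mul_eq_one_left
    have hNQ : N ≠ 0 := by exact_mod_cast hNne
    push_cast
    field_simp
    linear_combination key
end CFAux3


namespace CFAux4

/-- orbit of complete quotients -/
noncomputable def orb (α : ℝ) : ℕ → ℝ
  | 0 => α
  | n + 1 => (Int.fract (orb α n))⁻¹

/-- quadratic coefficient triples -/
noncomputable def trip (α : ℝ) (T0 : ℤ × ℤ × ℤ) : ℕ → ℤ × ℤ × ℤ
  | 0 => T0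
  | n + 1 =>
    let T := trip α T0 n
    let m := ⌊orb α n⌋
    (T.1 * m ^ 2 + T.2.1 * m + T.2.2, 2 * T.1 * m + T.2.1, T.1)

variable {α : ℝ} {T0 : ℤ × ℤ × ℤ}

lemma irr_fract {v : ℝ} (hv : Irrational v) : Irrational (Int.fract v) := by
  simpa [Int.fract, sub_eq_add_neg] using Irrational.sub_intCast hv ⌊v⌋

lemma orb_irr (hirr : Irrational α) : ∀ n, Irrational (orb α n)
  | 0 => hirr
  | n + 1 => (irr_fract (orb_irr hirr n)).inv

lemma orb_one_lt (hirr : Irrational α) (n : ℕ) : 1 < orb α (n + 1) := by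
  show 1 < (Int.fract (orb α n))⁻¹
  have h := orb_irr hirr n
  exact (one_lt_inv₀ (lt_of_le_of_ne (Int.fract_nonneg _) (Ne.symm (irr_fract h).ne_zero))).mpr
    (Int.fract_lt_one _)

lemma floor_orb_pos (hirr : Irrational α) (n : ℕ) : 1 ≤ ⌊orb α (n + 1)⌋ := by
  rw [Int.le_floor]; exact_mod_cast (orb_one_lt hirr n).le

lemma orb_rec_mul (hirr : Irrational α) (n : ℕ) :
    orb α (n + 1) * (orb α n - ⌊orb α n⌋) = 1 := by
  show (Int.fract (orb α n))⁻¹ * _ = 1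
  rw [show orb α n - (⌊orb α n⌋ : ℝ) = Int.fract (orb α n) from rfl]
  exact inv_mul_cancel₀ (irr_fract (orb_irr hirr n)).ne_zero

section Quad

variable (hirr : Irrational α) (hA0 : T0.1 ≠ 0)
  (hroot : (T0.1 : ℝ) * α ^ 2 + T0.2.1 * α + T0.2.2 = 0)

include hirr hA0 hroot

lemma trip_invariant : ∀ n, (trip α T0 n).1 ≠ 0 ∧
    ((trip α T0 n).1 : ℝ) * (orb α n) ^ 2 + ((trip α T0 n).2.1 : ℝ) * (orb α n)
      + ((trip α T0 n).2.2 : ℝ) = 0 := by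
  intro n
  induction n with
  | zero => exact ⟨hA0, hroot⟩
  | succ n ih =>
    obtain ⟨hAne, hq⟩ := ih
    set A := (trip α T0 n).1
    set B := (trip α T0 n).2.1
    set C := (trip α T0 n).2.2
    set m : ℤ := ⌊orb α n⌋ with hm
    set v := orb α n with hv
    have hT : trip α T0 (n + 1) = (A * m ^ 2 + B * m + C, 2 * A * m + B, A) := rfl
    have hvirr := orb_irr hirr n
    have htne : v - (m : ℝ) ≠ 0 := by
      rw [hm, hv, show orb α n - (⌊orb α n⌋ : ℝ) = Int.fract (orb α n) from rfl]
      exact (irr_fract hvirr).ne_zero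
    have hrec : orb α (n + 1) * (v - m) = 1 := orb_rec_mul hirr n
    have hAne' : A * m ^ 2 + B * m + C ≠ 0 := by
      intro h0
      have h0R : (A : ℝ) * m ^ 2 + B * m + C = 0 := by exact_mod_cast h0
      -- factor: A v² + Bv + C - (Am² + Bm + C) = (v - m)(A(v+m) + B) = 0
      have hfac : (v - (m : ℝ)) * ((A : ℝ) * (v + m) + B) = 0 := by
        linear_combination hq - h0R
      rcases mul_eq_zero.mp hfac with h | h
      · exact htne h
      · -- v = (-B - A m)/A rational
        apply hvirr
        refine ⟨(-B - A * m : ℚ) / (A : ℚ), ?_⟩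
        have hAR : (A : ℝ) ≠ 0 := by exact_mod_cast hAne
        push_cast
        field_simp
        linarith [h]
    refine ⟨by rw [hT]; exact hAne', ?_⟩
    rw [hT]
    set u := orb α (n + 1) with hu
    have hune : u ≠ 0 := (orb_irr hirr (n + 1)).ne_zero
    -- u (v - m) = 1, goal: A' u² + B' u + C' = 0 with A'=Am²+Bm+C etc.
    show ((A * m ^ 2 + B * m + C : ℤ) : ℝ) * u ^ 2 + ((2 * A * m + B : ℤ) : ℝ) * u + (A : ℝ) = 0
    push_cast
    -- multiply quad at v by u²; use hrec : u(v-m)=1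
    linear_combination (u ^ 2) * hq - ((A:ℝ) * ((m:ℝ) * u + 1 + u * v) + (B:ℝ) * u) * hrec

lemma trip_D_const : ∀ n, (trip α T0 n).2.1 ^ 2 - 4 * (trip α T0 n).1 * (trip α T0 n).2.2
    = T0.2.1 ^ 2 - 4 * T0.1 * T0.2.2 := by
  intro n
  induction n with
  | zero => rfl
  | succ n ih =>
    have hT : trip α T0 (n + 1) = ((trip α T0 n).1 * ⌊orb α n⌋ ^ 2 + (trip α T0 n).2.1 * ⌊orb α n⌋
        + (trip α T0 n).2.2, 2 * (trip α T0 n).1 * ⌊orb α n⌋ + (trip α T0 n).2.1,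
        (trip α T0 n).1) := rfl
    rw [hT, ← ih]
    ring

lemma D_sq (n : ℕ) : ((T0.2.1 ^ 2 - 4 * T0.1 * T0.2.2 : ℤ) : ℝ)
    = (2 * (trip α T0 n).1 * orb α n + (trip α T0 n).2.1) ^ 2 := by
  have hq := (trip_invariant hirr hA0 hroot n).2
  have hD := trip_D_const hirr hA0 hroot n
  have : ((T0.2.1 ^ 2 - 4 * T0.1 * T0.2.2 : ℤ) : ℝ)
      = ((trip α T0 n).2.1 : ℝ) ^ 2 - 4 * (trip α T0 n).1 * (trip α T0 n).2.2 := by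
    exact_mod_cast congrArg (fun z : ℤ => (z : ℝ)) hD.symm
  rw [this]
  linear_combination (-4 : ℝ) * ((trip α T0 n).1 : ℝ) * hq

lemma D_pos : 0 < T0.2.1 ^ 2 - 4 * T0.1 * T0.2.2 := by
  have h := D_sq hirr hA0 hroot 0
  have hne : 2 * ((trip α T0 0).1 : ℝ) * orb α 0 + ((trip α T0 0).2.1 : ℝ) ≠ 0 := by
    intro h0
    apply orb_irr hirr 0
    refine ⟨(-(trip α T0 0).2.1 : ℚ) / (2 * (trip α T0 0).1 : ℚ), ?_⟩
    have : ((trip α T0 0).1 : ℝ) ≠ 0 := by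
      exact_mod_cast (trip_invariant hirr hA0 hroot 0).1
    push_cast
    field_simp
    linarith [h0]
  have : (0 : ℝ) < ((T0.2.1 ^ 2 - 4 * T0.1 * T0.2.2 : ℤ) : ℝ) := by
    rw [h]
    positivity
  exact_mod_cast this

/-- the conjugate orbit -/
noncomputable def conjOrb (α : ℝ) (T0 : ℤ × ℤ × ℤ) (n : ℕ) : ℝ :=
  -((trip α T0 n).2.1 : ℝ) / ((trip α T0 n).1 : ℝ) - orb α n

lemma conj_quad (n : ℕ) : ((trip α T0 n).1 : ℝ) * (conjOrb α T0 n) ^ 2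
    + ((trip α T0 n).2.1 : ℝ) * conjOrb α T0 n + ((trip α T0 n).2.2 : ℝ) = 0 := by
  obtain ⟨hAne, hq⟩ := trip_invariant hirr hA0 hroot n
  have hAR : ((trip α T0 n).1 : ℝ) ≠ 0 := by exact_mod_cast hAne
  set v := orb α n
  set q := ((trip α T0 n).2.1 : ℝ) / ((trip α T0 n).1 : ℝ) with hqdef
  have hqA : q * ((trip α T0 n).1 : ℝ) = ((trip α T0 n).2.1 : ℝ) :=
    div_mul_cancel₀ _ hAR
  have hw : conjOrb α T0 n = -q - v := by rw [conjOrb, hqdef]; ring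
  rw [hw]
  linear_combination hq + (q + 2 * v) * hqA

lemma conj_irr (n : ℕ) : Irrational (conjOrb α T0 n) := by
  rw [conjOrb]
  have : -((trip α T0 n).2.1 : ℝ) / ((trip α T0 n).1 : ℝ)
      = ((-(trip α T0 n).2.1 / (trip α T0 n).1 : ℚ) : ℝ) := by push_cast; ring
  rw [this]
  exact Irrational.ratCast_sub (q := _) (orb_irr hirr n)

lemma conj_ne (n : ℕ) : conjOrb α T0 n ≠ orb α n := by
  intro h
  apply orb_irr hirr n
  obtain ⟨hAne, _⟩ := trip_invariant hirr hA0 hroot n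
  have hAR : ((trip α T0 n).1 : ℝ) ≠ 0 := by exact_mod_cast hAne
  refine ⟨(-(trip α T0 n).2.1 : ℚ) / (2 * (trip α T0 n).1 : ℚ), ?_⟩
  rw [conjOrb] at h
  push_cast
  field_simp at h ⊢
  linarith [h]

lemma conj_sum (n : ℕ) : conjOrb α T0 n + orb α n
    = -((trip α T0 n).2.1 : ℝ) / ((trip α T0 n).1 : ℝ) := by
  rw [conjOrb]; ring

/-- recursion for the conjugate orbit -/
lemma conj_rec (n : ℕ) : conjOrb α T0 (n + 1) * (conjOrb α T0 n - ⌊orb α n⌋) = 1 := by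
  obtain ⟨hAne, hq⟩ := trip_invariant hirr hA0 hroot n
  obtain ⟨hAne', hq'⟩ := trip_invariant hirr hA0 hroot (n + 1)
  set w := conjOrb α T0 n with hw
  set m : ℤ := ⌊orb α n⌋ with hm
  have hwm : w - (m : ℝ) ≠ 0 := by
    intro h
    exact (conj_irr hirr hA0 hroot n).ne_int m (by linarith [h])
  set z := (w - (m : ℝ))⁻¹ with hz
  have hzrec : z * (w - m) = 1 := inv_mul_cancel₀ hwm
  have hwq := conj_quad hirr hA0 hroot n
  -- z satisfies the (n+1) quadratic
  have hT : trip α T0 (n + 1) = ((trip α T0 n).1 * m ^ 2 + (trip α T0 n).2.1 * m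
      + (trip α T0 n).2.2, 2 * (trip α T0 n).1 * m + (trip α T0 n).2.1, (trip α T0 n).1) := rfl
  have hzq : ((trip α T0 (n+1)).1 : ℝ) * z ^ 2 + ((trip α T0 (n+1)).2.1 : ℝ) * z
      + ((trip α T0 (n+1)).2.2 : ℝ) = 0 := by
    rw [hT]
    push_cast
    linear_combination (z ^ 2) * hwq - (((trip α T0 n).1 : ℝ) * ((m:ℝ) * z + 1 + z * w)
      + ((trip α T0 n).2.1 : ℝ) * z) * hzrec
  -- z and orb (n+1) are both roots; z ≠ orb (n+1)
  have hzne : z ≠ orb α (n + 1) := by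
    intro h
    apply conj_ne hirr hA0 hroot n
    have hrec := orb_rec_mul hirr n
    -- z(w-m)=1 and orb(n+1)(v-m)=1 with z = orb(n+1) forces w = v
    have hone : orb α (n + 1) ≠ 0 := (orb_irr hirr (n + 1)).ne_zero
    have : orb α (n + 1) * (w - m) = 1 := by rw [← h]; exact hzrec
    have := mul_left_cancel₀ hone (this.trans hrec.symm)
    linarith [this]
  have hfac : (z - orb α (n + 1)) * (((trip α T0 (n+1)).1 : ℝ) * (z + orb α (n + 1))
      + ((trip α T0 (n+1)).2.1 : ℝ)) = 0 := by
    linear_combination hzq - hq'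
  have hsum : ((trip α T0 (n+1)).1 : ℝ) * (z + orb α (n + 1))
      + ((trip α T0 (n+1)).2.1 : ℝ) = 0 := by
    rcases mul_eq_zero.mp hfac with h | h
    · exact absurd (sub_eq_zero.mp h) hzne
    · exact h
  have hAR' : ((trip α T0 (n+1)).1 : ℝ) ≠ 0 := by exact_mod_cast hAne'
  have : conjOrb α T0 (n + 1) = z := by
    rw [conjOrb]
    field_simp
    linear_combination -hsum
  rw [this]
  exact hzrec

lemma vw_eq (n : ℕ) : (orb α n - conjOrb α T0 n) * ((trip α T0 n).1 : ℝ)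
    = 2 * ((trip α T0 n).1 : ℝ) * orb α n + ((trip α T0 n).2.1 : ℝ) := by
  have hAR : ((trip α T0 n).1 : ℝ) ≠ 0 := by
    exact_mod_cast (trip_invariant hirr hA0 hroot n).1
  have hqA : ((trip α T0 n).2.1 : ℝ) / ((trip α T0 n).1 : ℝ) * ((trip α T0 n).1 : ℝ)
      = ((trip α T0 n).2.1 : ℝ) := div_mul_cancel₀ _ hAR
  rw [conjOrb]
  linear_combination hqA

lemma delta_sq (n : ℕ) : (orb α n - conjOrb α T0 n) ^ 2 * ((trip α T0 n).1 : ℝ) ^ 2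
    = ((T0.2.1 ^ 2 - 4 * T0.1 * T0.2.2 : ℤ) : ℝ) := by
  rw [D_sq hirr hA0 hroot n]
  have h := vw_eq hirr hA0 hroot n
  linear_combination ((orb α n - conjOrb α T0 n) * ((trip α T0 n).1 : ℝ)
    + (2 * ((trip α T0 n).1 : ℝ) * orb α n + ((trip α T0 n).2.1 : ℝ))) * h

lemma delta_le (n : ℕ) : |orb α n - conjOrb α T0 n|
    ≤ Real.sqrt ((T0.2.1 ^ 2 - 4 * T0.1 * T0.2.2 : ℤ) : ℝ) := by
  have hAne := (trip_invariant hirr hA0 hroot n).1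
  have hA1 : (1 : ℝ) ≤ ((trip α T0 n).1 : ℝ) ^ 2 := by
    have h1 : (1 : ℤ) ≤ (trip α T0 n).1 ^ 2 := by
      have := Int.one_le_abs (by simpa using hAne)
      calc (1 : ℤ) = 1 * 1 := by ring
        _ ≤ |(trip α T0 n).1| * |(trip α T0 n).1| := mul_le_mul this this zero_le_one (abs_nonneg _)
        _ = (trip α T0 n).1 ^ 2 := by rw [abs_mul_abs_self]; ring
    exact_mod_cast h1
  have hsq : (orb α n - conjOrb α T0 n) ^ 2 ≤ ((T0.2.1 ^ 2 - 4 * T0.1 * T0.2.2 : ℤ) : ℝ) := by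
    have h := delta_sq hirr hA0 hroot n
    nlinarith [sq_nonneg (orb α n - conjOrb α T0 n)]
  calc |orb α n - conjOrb α T0 n| = Real.sqrt ((orb α n - conjOrb α T0 n) ^ 2) :=
        (Real.sqrt_sq_eq_abs _).symm
    _ ≤ _ := Real.sqrt_le_sqrt hsq

lemma delta_pos (n : ℕ) : 0 < |orb α n - conjOrb α T0 n| :=
  abs_pos.mpr (sub_ne_zero.mpr (Ne.symm (conj_ne hirr hA0 hroot n)))

/-- Step A: the conjugate eventually becomes negative. -/
lemma exists_conj_neg : ∃ N, conjOrb α T0 (N + 1) < 0 := by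
  by_contra hcon
  push_neg at hcon
  have hwpos : ∀ n, 0 < conjOrb α T0 (n + 1) := fun n =>
    lt_of_le_of_ne (hcon n) (Ne.symm (conj_irr hirr hA0 hroot (n + 1)).ne_zero)
  -- fractional parts of the orbit
  have hfr : ∀ n : ℕ, orb α n - (⌊orb α n⌋ : ℝ) = Int.fract (orb α n) := fun n => rfl
  have hf_pos : ∀ n : ℕ, 0 < orb α n - ⌊orb α n⌋ := by
    intro n
    rw [hfr n]
    exact lt_of_le_of_ne (Int.fract_nonneg _) (Ne.symm (irr_fract (orb_irr hirr n)).ne_zero)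
  have hf_lt1 : ∀ n : ℕ, orb α n - ⌊orb α n⌋ < 1 := by
    intro n
    rw [hfr n]
    exact Int.fract_lt_one _
  -- conjugate minus floor
  have hg_pos : ∀ n, 0 < conjOrb α T0 (n + 1) - ⌊orb α (n + 1)⌋ := by
    intro n
    have hrec := conj_rec hirr hA0 hroot (n + 1)
    have hw2 := hwpos (n + 1)
    by_contra h
    push_neg at h
    nlinarith
  have hg_lt1 : ∀ n, conjOrb α T0 (n + 1) - ⌊orb α (n + 1)⌋ < 1 := by
    intro n
    by_contra h
    push_neg at h
    have hrec := conj_rec hirr hA0 hroot (n + 1)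
    have hw2 := hwpos (n + 1)
    have hle : conjOrb α T0 (n + 2) ≤ 1 := by nlinarith
    have hne : conjOrb α T0 (n + 2) ≠ 1 := by
      have := (conj_irr hirr hA0 hroot (n + 2)).ne_int 1
      simpa using this
    have hlt : conjOrb α T0 (n + 2) < 1 := lt_of_le_of_ne hle hne
    have hm := floor_orb_pos hirr (n + 1)
    have hg2 := hg_pos (n + 1)
    have : ((⌊orb α (n + 2)⌋ : ℤ) : ℝ) ≥ 1 := by exact_mod_cast hm
    linarith
  set δ : ℕ → ℝ := fun n => |orb α n - conjOrb α T0 n| with hδ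
  have hδpos : ∀ n, 0 < δ n := fun n => delta_pos hirr hA0 hroot n
  have hδeq : ∀ n, δ (n + 1) = |(orb α (n+1) - ⌊orb α (n+1)⌋) - (conjOrb α T0 (n+1) - ⌊orb α (n+1)⌋)| := by
    intro n; rw [hδ]; congr 1; ring
  have hδlt1 : ∀ n, δ (n + 1) < 1 := by
    intro n
    rw [hδeq n]
    rw [abs_lt]
    constructor
    · nlinarith [hf_pos (n+1), hg_lt1 n]
    · nlinarith [hf_lt1 (n+1), hg_pos n]
  -- recursion
  have hδrec : ∀ n, δ (n + 2) * ((orb α (n+1) - ⌊orb α (n+1)⌋) * (conjOrb α T0 (n+1) - ⌊orb α (n+1)⌋)) = δ (n + 1) := by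
    intro n
    have hvrec := orb_rec_mul hirr (n + 1)
    have hwrec := conj_rec hirr hA0 hroot (n + 1)
    have key : (orb α (n+2) - conjOrb α T0 (n+2))
        * ((orb α (n+1) - ⌊orb α (n+1)⌋) * (conjOrb α T0 (n+1) - ⌊orb α (n+1)⌋))
        = conjOrb α T0 (n+1) - orb α (n+1) := by
      linear_combination (conjOrb α T0 (n+1) - (⌊orb α (n+1)⌋:ℝ)) * hvrec
        - (orb α (n+1) - (⌊orb α (n+1)⌋:ℝ)) * hwrec
    have habs := congrArg (fun x : ℝ => |x|) key
    simp only [abs_mul] at habs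
    rw [abs_of_pos (hf_pos (n+1)), abs_of_pos (hg_pos n),
      abs_sub_comm (conjOrb α T0 (n+1)) (orb α (n+1))] at habs
    rw [hδ]
    simp only []
    rw [← mul_assoc] at habs ⊢
    exact habs
  have hfg_le : ∀ n, (orb α (n+1) - ⌊orb α (n+1)⌋) * (conjOrb α T0 (n+1) - ⌊orb α (n+1)⌋)
      ≤ 1 - δ (n + 1) := by
    intro n
    rw [hδeq n]
    rcases le_total (orb α (n+1) - (⌊orb α (n+1)⌋:ℝ)) (conjOrb α T0 (n+1) - (⌊orb α (n+1)⌋:ℝ))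
      with h | h
    · rw [abs_of_nonpos (by linarith)]
      nlinarith [mul_pos (hg_pos n) (sub_pos.mpr (hf_lt1 (n+1))), hf_pos (n+1), hg_lt1 n]
    · rw [abs_of_nonneg (by linarith)]
      nlinarith [mul_pos (hf_pos (n+1)) (sub_pos.mpr (hg_lt1 n)), hg_pos n, hf_lt1 (n+1)]
  have hmono : ∀ n, δ (n + 1) ≤ δ (n + 2) := by
    intro n
    have h1 := hδrec n
    have h2 := hfg_le n
    have h3 := hδpos (n + 2)
    nlinarith [hδlt1 n]
  have hδ1le : ∀ n, δ 1 ≤ δ (n + 1) := by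
    intro n
    induction n with
    | zero => exact le_rfl
    | succ n ih => exact ih.trans (hmono n)
  set r := (1 - δ 1)⁻¹ with hr
  have h1δ1 : 0 < 1 - δ 1 := by linarith [hδlt1 0]
  have hr1 : 1 < r := by
    rw [hr]
    exact (one_lt_inv₀ h1δ1).mpr (by linarith [hδpos 1])
  have hgrow : ∀ k, δ 1 * r ^ k ≤ δ (1 + k) := by
    intro k
    induction k with
    | zero => simp
    | succ k ih =>
      have h1 := hδrec k
      have h2 := hfg_le k
      have h3 := hδpos (k + 2)
      have h5 := hδ1le k
      have hfg_le' : (orb α (k+1) - ⌊orb α (k+1)⌋) * (conjOrb α T0 (k+1) - ⌊orb α (k+1)⌋)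
          ≤ 1 - δ 1 := by linarith
      have step : δ (k + 1) * r ≤ δ (k + 2) := by
        have : δ (k + 1) ≤ δ (k + 2) * (1 - δ 1) := by
          nlinarith [mul_le_mul_of_nonneg_left hfg_le' h3.le]
        calc δ (k + 1) * r ≤ (δ (k + 2) * (1 - δ 1)) * r :=
              mul_le_mul_of_nonneg_right this (by positivity)
          _ = δ (k + 2) * ((1 - δ 1) * r) := by ring
          _ = δ (k + 2) := by rw [hr, mul_inv_cancel₀ (ne_of_gt h1δ1), mul_one]
      have : δ 1 * r ^ (k + 1) = (δ 1 * r ^ k) * r := by ring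
      rw [this]
      calc (δ 1 * r ^ k) * r ≤ δ (1 + k) * r :=
            mul_le_mul_of_nonneg_right ih (by positivity)
        _ ≤ δ (1 + (k + 1)) := by
            have : 1 + (k + 1) = k + 2 := by omega
            rw [this]
            have h1k : 1 + k = k + 1 := by omega
            rw [h1k] at *
            exact step
  obtain ⟨k, hk⟩ := pow_unbounded_of_one_lt
    (Real.sqrt ((T0.2.1 ^ 2 - 4 * T0.1 * T0.2.2 : ℤ) : ℝ) / δ 1) hr1
  have hle := delta_le hirr hA0 hroot (1 + k)
  have hgk := hgrow k
  rw [div_lt_iff₀ (hδpos 1)] at hk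
  have : Real.sqrt ((T0.2.1 ^ 2 - 4 * T0.1 * T0.2.2 : ℤ) : ℝ) < δ (1 + k) := by
    calc Real.sqrt _ < r ^ k * δ 1 := hk
      _ = δ 1 * r ^ k := by ring
      _ ≤ δ (1 + k) := hgk
  rw [hδ] at this
  linarith

/-- Step B: eventually the conjugate lies in (-1, 0). -/
lemma conj_tail : ∃ M, ∀ k : ℕ,
    -1 < conjOrb α T0 (M + k + 1) ∧ conjOrb α T0 (M + k + 1) < 0 := by
  obtain ⟨N, hN⟩ := exists_conj_neg hirr hA0 hroot
  have hneg : ∀ k, conjOrb α T0 (N + 1 + k) < 0 := by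
    intro k
    induction k with
    | zero => simpa using hN
    | succ k ih =>
      have hrec := conj_rec hirr hA0 hroot (N + 1 + k)
      have hm : (1 : ℝ) ≤ ((⌊orb α (N + 1 + k)⌋ : ℤ) : ℝ) := by
        have h' := floor_orb_pos hirr (N + k)
        rw [show N + k + 1 = N + 1 + k from by omega] at h'
        exact_mod_cast h'
      have hs : conjOrb α T0 (N + 1 + k) - (⌊orb α (N + 1 + k)⌋ : ℝ) < -1 := by linarith
      show conjOrb α T0 (N + 1 + k + 1) < 0
      nlinarith
  have hbig : ∀ k, -1 < conjOrb α T0 (N + 2 + k) := by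
    intro k
    have hrec := conj_rec hirr hA0 hroot (N + 1 + k)
    have hm : (1 : ℝ) ≤ ((⌊orb α (N + 1 + k)⌋ : ℤ) : ℝ) := by
      have h' := floor_orb_pos hirr (N + k)
      rw [show N + k + 1 = N + 1 + k from by omega] at h'
      exact_mod_cast h'
    have hw := hneg k
    have hs : conjOrb α T0 (N + 1 + k) - (⌊orb α (N + 1 + k)⌋ : ℝ) < -1 := by linarith
    have heq : N + 2 + k = N + 1 + k + 1 := by omega
    rw [heq]
    nlinarith
  refine ⟨N + 1, fun k => ⟨?_, ?_⟩⟩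
  · have := hbig k
    have heq : N + 1 + k + 1 = N + 2 + k := by omega
    rw [heq]; exact this
  · have := hneg (k + 1)
    have heq : N + 1 + k + 1 = N + 1 + (k + 1) := by omega
    rw [heq]; exact this

/-- The periodicity statement. -/
lemma exists_orb_eq : ∃ i j : ℕ, i < j ∧ orb α i = orb α j := by
  obtain ⟨M, hM⟩ := conj_tail hirr hA0 hroot
  set D : ℤ := T0.2.1 ^ 2 - 4 * T0.1 * T0.2.2 with hD
  have hDpos : 0 < D := D_pos hirr hA0 hroot
  have hv_gt : ∀ k : ℕ, 1 < orb α (M + k + 1) := fun k => orb_one_lt hirr (M + k)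
  -- |A| is bounded along the tail
  have hAbd : ∀ k : ℕ, (trip α T0 (M + k + 1)).1 ^ 2 ≤ D := by
    intro k
    have hδ : 1 < orb α (M + k + 1) - conjOrb α T0 (M + k + 1) := by
      have := (hM k).2
      have := hv_gt k
      linarith
    have hs := delta_sq hirr hA0 hroot (M + k + 1)
    have hA2 : (0:ℝ) < ((trip α T0 (M + k + 1)).1 : ℝ) ^ 2 := by
      have := (trip_invariant hirr hA0 hroot (M + k + 1)).1
      have : ((trip α T0 (M + k + 1)).1 : ℝ) ≠ 0 := by exact_mod_cast this
      positivity
    have hδ2 : 1 < (orb α (M + k + 1) - conjOrb α T0 (M + k + 1)) ^ 2 := by nlinarith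
    have hR : (((trip α T0 (M + k + 1)).1 : ℝ)) ^ 2 < ((D : ℤ) : ℝ) := by
      nlinarith [mul_lt_mul_of_pos_right hδ2 hA2]
    have hZ : (trip α T0 (M + k + 1)).1 ^ 2 < D := by exact_mod_cast hR
    omega
  -- box bounds for all three coefficients from index M+2 on
  have habs : ∀ x : ℤ, x ^ 2 ≤ D → |x| ≤ D := by
    intro x hx
    by_contra h
    push_neg at h
    have h1 : D + 1 ≤ |x| := h
    have h2 : (D + 1) * (D + 1) ≤ |x| * |x| :=
      mul_le_mul h1 h1 (by omega) (abs_nonneg x)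
    nlinarith [sq_abs x, hDpos]
  have hbox : ∀ k : ℕ, |(trip α T0 (M + k + 2)).1| ≤ 3 * D
      ∧ |(trip α T0 (M + k + 2)).2.1| ≤ 3 * D ∧ |(trip α T0 (M + k + 2)).2.2| ≤ 3 * D := by
    intro k
    have hA2 := hAbd (k + 1)
    have hA1 := hAbd k
    have heq1 : M + (k + 1) + 1 = M + k + 2 := by omega
    rw [heq1] at hA2
    have hC : (trip α T0 (M + k + 2)).2.2 = (trip α T0 (M + k + 1)).1 := rfl
    have hAabs : |(trip α T0 (M + k + 2)).1| ≤ D := habs _ hA2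
    have hCabs : |(trip α T0 (M + k + 2)).2.2| ≤ D := by rw [hC]; exact habs _ hA1
    have hDconst := trip_D_const hirr hA0 hroot (M + k + 2)
    have hB2 : (trip α T0 (M + k + 2)).2.1 ^ 2 = D + 4 * (trip α T0 (M + k + 2)).1 * (trip α T0 (M + k + 2)).2.2 := by
      rw [hD]; linarith [hDconst]
    have hACle : (trip α T0 (M + k + 2)).1 * (trip α T0 (M + k + 2)).2.2 ≤ D * D := by
      calc (trip α T0 (M + k + 2)).1 * (trip α T0 (M + k + 2)).2.2
          ≤ |(trip α T0 (M + k + 2)).1 * (trip α T0 (M + k + 2)).2.2| := le_abs_self _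
        _ = |(trip α T0 (M + k + 2)).1| * |(trip α T0 (M + k + 2)).2.2| := abs_mul _ _
        _ ≤ D * D := mul_le_mul hAabs hCabs (abs_nonneg _) hDpos.le
    have hB2le : (trip α T0 (M + k + 2)).2.1 ^ 2 ≤ 9 * D ^ 2 := by nlinarith
    have hBabs : |(trip α T0 (M + k + 2)).2.1| ≤ 3 * D := by
      nlinarith [abs_nonneg (trip α T0 (M + k + 2)).2.1, sq_abs (trip α T0 (M + k + 2)).2.1]
    exact ⟨hAabs.trans (by nlinarith), hBabs, hCabs.trans (by nlinarith)⟩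
  -- pigeonhole
  set T : Finset (ℤ × ℤ × ℤ) :=
    Finset.Icc (-(3*D)) (3*D) ×ˢ (Finset.Icc (-(3*D)) (3*D) ×ˢ Finset.Icc (-(3*D)) (3*D)) with hT
  have hmem : ∀ k : ℕ, trip α T0 (M + k + 2) ∈ T := by
    intro k
    obtain ⟨h1, h2, h3⟩ := hbox k
    rw [hT]
    simp only [Finset.mem_product, Finset.mem_Icc]
    rw [abs_le] at h1 h2 h3
    exact ⟨⟨h1.1, h1.2⟩, ⟨h2.1, h2.2⟩, ⟨h3.1, h3.2⟩⟩
  have : ∃ k₁ k₂ : ℕ, k₁ ≠ k₂ ∧ trip α T0 (M + k₁ + 2) = trip α T0 (M + k₂ + 2) := by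
    obtain ⟨k₁, k₂, hne, heq⟩ := Finite.exists_ne_map_eq_of_infinite
      (fun k : ℕ => (⟨trip α T0 (M + k + 2), hmem k⟩ : {x // x ∈ T}))
    exact ⟨k₁, k₂, hne, by simpa using congrArg Subtype.val heq⟩
  obtain ⟨k₁, k₂, hne, heq⟩ := this
  -- wlog k₁ < k₂
  wlog hlt : k₁ < k₂ generalizing k₁ k₂
  · exact this k₂ k₁ (Ne.symm hne) heq.symm (by omega)
  refine ⟨M + k₁ + 2, M + k₂ + 2, by omega, ?_⟩
  set i := M + k₁ + 2
  set j := M + k₂ + 2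
  have hqi := (trip_invariant hirr hA0 hroot i).2
  have hqj := (trip_invariant hirr hA0 hroot j).2
  rw [show trip α T0 j = trip α T0 i from heq.symm] at hqj
  have hfac : (orb α i - orb α j) * (((trip α T0 i).1 : ℝ) * (orb α i + orb α j)
      + ((trip α T0 i).2.1 : ℝ)) = 0 := by linear_combination hqi - hqj
  rcases mul_eq_zero.mp hfac with h | h
  · linarith [sub_eq_zero.mp h]
  · -- orb α j equals the conjugate at i, contradiction with positivity
    exfalso
    have hAR : ((trip α T0 i).1 : ℝ) ≠ 0 := by
      exact_mod_cast (trip_invariant hirr hA0 hroot i).1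
    have hji : orb α j = conjOrb α T0 i := by
      rw [conjOrb]
      field_simp
      linear_combination h
    have hconj_neg : conjOrb α T0 i < 0 := by
      have := (hM (k₁ + 1)).2
      have heqi : M + (k₁ + 1) + 1 = i := by omega
      rwa [heqi] at this
    have : 1 < orb α j := by
      have := hv_gt (k₂ + 1)
      have heqj : M + (k₂ + 1) + 1 = j := by omega
      rwa [heqj] at this
    rw [hji] at this
    linarith

end Quad
end CFAux4


namespace Glue
open CFAux CFAux2 CFAux3 CFAux4

variable {α : ℝ} {c₀ c₁ : ℚ}

lemma memS_orb (hirr : Irrational α) (hc : α ^ 2 = (c₀ : ℝ) + (c₁ : ℝ) * α) :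
    ∀ n, memS α (orb α n)
  | 0 => memS_self
  | n + 1 => by
    show memS α (Int.fract (orb α n))⁻¹
    apply memS_inv hirr hc
    have : Int.fract (orb α n) = orb α n - (⌊orb α n⌋ : ℝ) := rfl
    rw [this]
    exact memS_sub (memS_orb hirr hc n) (memS_intcast _)

lemma memS_fract_orb (hirr : Irrational α) (hc : α ^ 2 = (c₀ : ℝ) + (c₁ : ℝ) * α) (n : ℕ) :
    memS α (Int.fract (orb α n)) := by
  have : Int.fract (orb α n) = orb α n - (⌊orb α n⌋ : ℝ) := rfl
  rw [this]
  exact memS_sub (memS_orb hirr hc n) (memS_intcast _)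

lemma unroll (hirr : Irrational α) (hc : α ^ 2 = (c₀ : ℝ) + (c₁ : ℝ) * α) :
    ∀ j i : ℕ, ∃ c d : ℝ, memS α c ∧ memS α d ∧ 0 < d ∧ d ≤ 1 ∧ (1 ≤ j → d < 1) ∧
      E (orb α i) = c + d * E (orb α (i + j)) := by
  intro j
  induction j with
  | zero =>
    intro i
    exact ⟨0, 1, ⟨0, 0, by simp⟩, memS_one, one_pos, le_rfl, by omega, by simp⟩
  | succ j ih =>
    intro i
    obtain ⟨c, d, hcS, hdS, hd0, hd1, _, hE⟩ := ih (i + 1)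
    set f := Int.fract (orb α i) with hf
    have hirri := orb_irr hirr i
    have hf0 : 0 < f := CFAux.fract_pos hirri
    have hf1 : f < 1 := Int.fract_lt_one _
    have hfS : memS α f := memS_fract_orb hirr hc i
    have hrec : E (orb α i) = f * (1 + E (orb α (i + 1))) := E_rec hirri
    refine ⟨f + f * c, f * d, memS_add hfS (memS_mul hc hfS hcS), memS_mul hc hfS hdS,
      mul_pos hf0 hd0, ?_, fun _ => ?_, ?_⟩
    · nlinarith
    · nlinarith
    · rw [hrec, hE, show i + 1 + j = i + (j + 1) from by omega]
      ring

theorem main (hα : 0 < α) (hirr : Irrational α)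
    (hquad : ∃ a b c : ℚ, a ≠ 0 ∧ (a : ℝ) * α ^ 2 + (b : ℝ) * α + (c : ℝ) = 0) :
    ∃ a b : ℚ, (∑' n : ℕ, |cfDen α n * α - cfNum α n|) = (a : ℝ) + (b : ℝ) * α := by
  obtain ⟨a, b, c, ha, habc⟩ := hquad
  have haR : (a : ℝ) ≠ 0 := by exact_mod_cast ha
  -- quadratic in normalized form
  have hc : α ^ 2 = (((-c / a : ℚ)) : ℝ) + (((-b / a : ℚ)) : ℝ) * α := by
    push_cast
    field_simp
    linear_combination habc
  -- integer coefficients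
  set T0 : ℤ × ℤ × ℤ := (a.num * (b.den * c.den), b.num * (a.den * c.den),
    c.num * (a.den * b.den)) with hT0
  have hA0 : T0.1 ≠ 0 := by
    rw [hT0]
    simp only []
    have := Rat.num_ne_zero.mpr ha
    positivity
  have hroot : (T0.1 : ℝ) * α ^ 2 + (T0.2.1 : ℝ) * α + (T0.2.2 : ℝ) = 0 := by
    rw [hT0]
    have ea : ((a.num : ℝ)) = (a : ℝ) * (a.den : ℝ) := by
      exact_mod_cast congrArg (fun q : ℚ => (q : ℝ)) (Rat.mul_den_eq_num a).symm
    have eb : ((b.num : ℝ)) = (b : ℝ) * (b.den : ℝ) := by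
      exact_mod_cast congrArg (fun q : ℚ => (q : ℝ)) (Rat.mul_den_eq_num b).symm
    have ec : ((c.num : ℝ)) = (c : ℝ) * (c.den : ℝ) := by
      exact_mod_cast congrArg (fun q : ℚ => (q : ℝ)) (Rat.mul_den_eq_num c).symm
    simp only []
    push_cast
    linear_combination ((a.den : ℝ) * (b.den : ℝ) * (c.den : ℝ)) * habc
      + α ^ 2 * ((b.den : ℝ) * (c.den : ℝ)) * ea + α * ((a.den : ℝ) * (c.den : ℝ)) * eb
      + ((a.den : ℝ) * (b.den : ℝ)) * ec
  -- periodicity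
  obtain ⟨i, j, hij, horb⟩ := exists_orb_eq hirr hA0 hroot
  -- unroll from i to j
  obtain ⟨cc, dd, hccS, hddS, hdd0, _, hdd1, hEij⟩ := unroll hirr hc (j - i) i
  rw [show i + (j - i) = j from by omega, ← horb] at hEij
  have hdd1' : dd < 1 := hdd1 (by omega)
  have hEi : E (orb α i) = cc * (1 - dd)⁻¹ := by
    have hne : (1 : ℝ) - dd ≠ 0 := by linarith
    have h1 : E (orb α i) * (1 - dd) = cc := by
      have := hEij
      ring_nf
      ring_nf at this
      linarith
    rw [← h1, mul_assoc, mul_inv_cancel₀ hne, mul_one]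
  have hEiS : memS α (E (orb α i)) := by
    rw [hEi]
    exact memS_mul hc hccS (memS_inv hirr hc (memS_sub memS_one hddS))
  -- unroll from 0 to i
  obtain ⟨cc', dd', hccS', hddS', _, _, _, hE0⟩ := unroll hirr hc i 0
  rw [show 0 + i = i from by omega] at hE0
  have hEαS : memS α (E (orb α 0)) := by
    rw [hE0]
    exact memS_add hccS' (memS_mul hc hddS' hEiS)
  -- identify with the goal
  have : (∑' n : ℕ, |cfDen α n * α - cfNum α n|) = E (orb α 0) := by
    rfl
  rw [this]
  exact hEαS
end Glue

theorem errorSum_quadratic_mem_Q_alpha (α : ℝ) (hα : 0 < α) (hirr : Irrational α)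
    (hquad : ∃ a b c : ℚ, a ≠ 0 ∧ (a : ℝ) * α ^ 2 + (b : ℝ) * α + (c : ℝ) = 0) :
    ∃ a b : ℚ, (∑' n : ℕ, |cfDen α n * α - cfNum α n|) = (a : ℝ) + (b : ℝ) * α := by
  exact Glue.main hα hirr hquad
end

section
/- Let pₙ/qₙ denote the nth convergent of the regular continued fraction expansion of √7. Then ∑_{n≥0} |qₙ·√7 − pₙ| = (7 + 5·√7)/14. -/
open Real

section Aux
open GenContFract

noncomputable abbrev S7 : ℝ := Real.sqrt 7
noncomputable abbrev W1 : ℝ := (S7 + 2) / 3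
noncomputable abbrev W2 : ℝ := (S7 + 1) / 2
noncomputable abbrev W3 : ℝ := (S7 + 1) / 3
noncomputable abbrev W4 : ℝ := S7 + 2

lemma s7_sq : S7 ^ 2 = 7 := Real.sq_sqrt (by norm_num)
lemma s7_nonneg : 0 ≤ S7 := Real.sqrt_nonneg 7
lemma s7_gt : 2 < S7 := by nlinarith [s7_sq, s7_nonneg]
lemma s7_lt : S7 < 3 := by nlinarith [s7_sq, s7_nonneg]

lemma fract_v : Int.fract S7 = S7 - 2 := by
  have : ⌊S7⌋ = 2 := by
    rw [Int.floor_eq_iff]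
    constructor
    · push_cast; linarith [s7_gt]
    · push_cast; linarith [s7_lt]
  simp [Int.fract, this]

lemma inv_v : (Int.fract S7)⁻¹ = W1 := by
  rw [fract_v]
  exact inv_eq_of_mul_eq_one_right (by simp only [W1, W2, W3, W4]; field_simp; nlinarith [s7_sq])

lemma floor_w1 : ⌊W1⌋ = 1 := by
  simp only [W1, W2, W3, W4]
  rw [Int.floor_eq_iff] <;> push_cast <;> constructor <;>
    [linarith [s7_gt]; linarith [s7_lt]]

lemma fract_w1 : Int.fract W1 = (S7 - 1) / 3 := by
  simp only [Int.fract, floor_w1]; push_cast; ring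

lemma inv_w1 : (Int.fract W1)⁻¹ = W2 := by
  rw [fract_w1]
  exact inv_eq_of_mul_eq_one_right (by simp only [W1, W2, W3, W4]; field_simp; nlinarith [s7_sq])

lemma floor_w2 : ⌊W2⌋ = 1 := by
  simp only [W1, W2, W3, W4]
  rw [Int.floor_eq_iff] <;> push_cast <;> constructor <;>
    [linarith [s7_gt]; linarith [s7_lt]]

lemma fract_w2 : Int.fract W2 = (S7 - 1) / 2 := by
  simp only [Int.fract, floor_w2]; push_cast; ring

lemma inv_w2 : (Int.fract W2)⁻¹ = W3 := by
  rw [fract_w2]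
  exact inv_eq_of_mul_eq_one_right (by simp only [W1, W2, W3, W4]; field_simp; nlinarith [s7_sq])

lemma floor_w3 : ⌊W3⌋ = 1 := by
  simp only [W1, W2, W3, W4]
  rw [Int.floor_eq_iff] <;> push_cast <;> constructor <;>
    [linarith [s7_gt]; linarith [s7_lt]]

lemma fract_w3 : Int.fract W3 = (S7 - 2) / 3 := by
  simp only [Int.fract, floor_w3]; push_cast; ring

lemma inv_w3 : (Int.fract W3)⁻¹ = W4 := by
  rw [fract_w3]
  exact inv_eq_of_mul_eq_one_right (by simp only [W1, W2, W3, W4]; field_simp; nlinarith [s7_sq])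

lemma floor_w4 : ⌊W4⌋ = 4 := by
  simp only [W1, W2, W3, W4]
  rw [Int.floor_eq_iff] <;> push_cast <;> constructor <;>
    [linarith [s7_gt]; linarith [s7_lt]]

lemma fract_w4 : Int.fract W4 = S7 - 2 := by
  simp only [Int.fract, floor_w4]; push_cast; ring

lemma inv_w4 : (Int.fract W4)⁻¹ = W1 := by
  rw [fract_w4]
  exact inv_eq_of_mul_eq_one_right (by simp only [W1, W2, W3, W4]; field_simp; nlinarith [s7_sq])

lemma fract_v_ne : Int.fract S7 ≠ 0 := by rw [fract_v]; nlinarith [s7_gt]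
lemma fract_w1_ne : Int.fract W1 ≠ 0 := by rw [fract_w1]; nlinarith [s7_gt]
lemma fract_w2_ne : Int.fract W2 ≠ 0 := by rw [fract_w2]; nlinarith [s7_gt]
lemma fract_w3_ne : Int.fract W3 ≠ 0 := by rw [fract_w3]; nlinarith [s7_gt]
lemma fract_w4_ne : Int.fract W4 ≠ 0 := by rw [fract_w4]; nlinarith [s7_gt]

lemma s_succ_v (n : ℕ) : (GenContFract.of S7).s.get? (n+1) = (GenContFract.of W1).s.get? n := by
  rw [of_s_succ, inv_v]
lemma s_succ_w1 (n : ℕ) : (GenContFract.of W1).s.get? (n+1) = (GenContFract.of W2).s.get? n := by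
  rw [of_s_succ, inv_w1]
lemma s_succ_w2 (n : ℕ) : (GenContFract.of W2).s.get? (n+1) = (GenContFract.of W3).s.get? n := by
  rw [of_s_succ, inv_w2]
lemma s_succ_w3 (n : ℕ) : (GenContFract.of W3).s.get? (n+1) = (GenContFract.of W4).s.get? n := by
  rw [of_s_succ, inv_w3]
lemma s_succ_w4 (n : ℕ) : (GenContFract.of W4).s.get? (n+1) = (GenContFract.of W1).s.get? n := by
  rw [of_s_succ, inv_w4]

lemma s0_v : (GenContFract.of S7).s.get? 0 = some ⟨1, 1⟩ := by
  have h := of_s_head fract_v_ne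
  rw [Stream'.Seq.head, inv_v, floor_w1] at h
  rw [h]; norm_num
lemma s0_w1 : (GenContFract.of W1).s.get? 0 = some ⟨1, 1⟩ := by
  have h := of_s_head fract_w1_ne
  rw [Stream'.Seq.head, inv_w1, floor_w2] at h
  rw [h]; norm_num
lemma s0_w2 : (GenContFract.of W2).s.get? 0 = some ⟨1, 1⟩ := by
  have h := of_s_head fract_w2_ne
  rw [Stream'.Seq.head, inv_w2, floor_w3] at h
  rw [h]; norm_num
lemma s0_w3 : (GenContFract.of W3).s.get? 0 = some ⟨1, 4⟩ := by
  have h := of_s_head fract_w3_ne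
  rw [Stream'.Seq.head, inv_w3, floor_w4] at h
  rw [h]; norm_num
lemma s0_w4 : (GenContFract.of W4).s.get? 0 = some ⟨1, 1⟩ := by
  have h := of_s_head fract_w4_ne
  rw [Stream'.Seq.head, inv_w4, floor_w1] at h
  rw [h]; norm_num

lemma s_periodic (n : ℕ) : (GenContFract.of S7).s.get? (n + 4) = (GenContFract.of S7).s.get? n := by
  cases n with
  | zero =>
      rw [show (0+4 : ℕ) = 3+1 from rfl, s_succ_v, s_succ_w1, s_succ_w2, s_succ_w3,
        s0_w4, s0_v]
  | succ m =>
      rw [show m+1+4 = (m+1)+3+1 from rfl, s_succ_v, s_succ_w1, s_succ_w2, s_succ_w3,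
        s_succ_w4, ← s_succ_v]

/-- partial denominators -/
def B (n : ℕ) : ℝ := if n % 4 = 3 then 4 else 1

lemma B_periodic (n : ℕ) : B (n + 4) = B n := by
  simp only [B, Nat.add_mod_right]

lemma s_eq (n : ℕ) : (GenContFract.of S7).s.get? n = some ⟨1, B n⟩ := by
  induction n using Nat.strong_induction_on with
  | _ n ih =>
    match n with
    | 0 => rw [s0_v]; norm_num [B]
    | 1 => rw [s_succ_v, s0_w1]; norm_num [B]
    | 2 => rw [s_succ_v, s_succ_w1, s0_w2]; norm_num [B]
    | 3 => rw [s_succ_v, s_succ_w1, s_succ_w2, s0_w3]; norm_num [B]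
    | (m+4) => rw [s_periodic, ih m (by omega), B_periodic]

noncomputable def E (n : ℕ) : ℝ := cfDen S7 n * S7 - cfNum S7 n

lemma floor_v : ⌊S7⌋ = 2 := by
  rw [Int.floor_eq_iff] <;> push_cast <;> constructor <;>
    [linarith [s7_gt]; linarith [s7_lt]]

lemma num_rec (n : ℕ) : cfNum S7 (n+2) = B (n+1) * cfNum S7 (n+1) + cfNum S7 n := by
  have h := GenContFract.nums_recurrence (g := GenContFract.of S7) (s_eq (n+1)) rfl rfl
  simpa [cfNum] using h

lemma den_rec (n : ℕ) : cfDen S7 (n+2) = B (n+1) * cfDen S7 (n+1) + cfDen S7 n := by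
  have h := GenContFract.dens_recurrence (g := GenContFract.of S7) (s_eq (n+1)) rfl rfl
  simpa [cfDen] using h

lemma E_rec (n : ℕ) : E (n+2) = B (n+1) * E (n+1) + E n := by
  simp only [E, num_rec, den_rec]; ring

lemma num0 : cfNum S7 0 = 2 := by
  simp [cfNum, GenContFract.zeroth_num_eq_h, GenContFract.of_h_eq_floor, floor_v]

lemma den0 : cfDen S7 0 = 1 := by
  simp [cfDen, GenContFract.zeroth_den_eq_one]

lemma num1 : cfNum S7 1 = 3 := by
  have h := GenContFract.first_num_eq (g := GenContFract.of S7) (s_eq 0)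
  simp [cfNum, h, GenContFract.of_h_eq_floor, floor_v, B]; norm_num

lemma den1 : cfDen S7 1 = 1 := by
  have h := GenContFract.first_den_eq (g := GenContFract.of S7) (s_eq 0)
  simp [cfDen, h, B]

lemma E0 : E 0 = S7 - 2 := by simp [E, num0, den0]
lemma E1 : E 1 = S7 - 3 := by simp [E, num1, den1]
lemma E2 : E 2 = 2*S7 - 5 := by
  have := E_rec 0; rw [E0, E1] at this; rw [this]; norm_num [B]; ring
lemma E3 : E 3 = 3*S7 - 8 := by
  have := E_rec 1; rw [E1, E2] at this; rw [this]; norm_num [B]; ring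
lemma E4 : E 4 = 14*S7 - 37 := by
  have := E_rec 2; rw [E2, E3] at this; rw [this]; norm_num [B]; ring
lemma E5 : E 5 = 17*S7 - 45 := by
  have := E_rec 3; rw [E3, E4] at this; rw [this]; norm_num [B]; ring

lemma E_period (n : ℕ) : E (n+4) = (8 - 3*S7) * E n := by
  induction n using Nat.strong_induction_on with
  | _ n ih =>
    match n with
    | 0 => rw [E0, E4]; nlinarith [s7_sq]
    | 1 => rw [E1, E5]; nlinarith [s7_sq]
    | (m+2) =>
      have h1 := ih m (by omega)
      have h2 := ih (m+1) (by omega)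
      have : m+2+4 = (m+4)+2 := by ring
      rw [this, E_rec (m+4), show m+4+1 = (m+1)+4 from by ring, h1, h2,
        B_periodic (m+1), E_rec m]
      ring

noncomputable def A (n : ℕ) : ℝ := |E n|

lemma kappa_nonneg : (0:ℝ) ≤ 8 - 3*S7 := by nlinarith [s7_sq, s7_nonneg]
lemma kappa_lt_one : 8 - 3*S7 < 1 := by nlinarith [s7_sq, s7_nonneg]

lemma A_period (n : ℕ) : A (n+4) = (8 - 3*S7) * A n := by
  rw [A, E_period, abs_mul, abs_of_nonneg kappa_nonneg, A]

lemma A0 : A 0 = S7 - 2 := by rw [A, E0, abs_of_nonneg]; linarith [s7_gt]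
lemma A1 : A 1 = 3 - S7 := by rw [A, E1, abs_of_nonpos] <;> linarith [s7_lt]
lemma A2 : A 2 = 2*S7 - 5 := by
  rw [A, E2, abs_of_nonneg]; nlinarith [s7_sq, s7_nonneg]
lemma A3 : A 3 = 8 - 3*S7 := by
  rw [A, E3, abs_of_nonpos] <;> nlinarith [s7_sq, s7_nonneg]

lemma A_formula (k j : ℕ) : A (k*4 + j) = (8 - 3*S7)^k * A j := by
  induction k with
  | zero => simp
  | succ k ih =>
      have : (k+1)*4 + j = (k*4 + j) + 4 := by ring
      rw [this, A_period, ih, pow_succ]; ring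

set_option maxHeartbeats 1000000 in
theorem errorSum_sqrt_seven :
    (∑' n : ℕ, |cfDen (Real.sqrt 7) n * Real.sqrt 7 - cfNum (Real.sqrt 7) n|)
      = (7 + 5 * Real.sqrt 7) / 14 := by
  have hA : ∀ n, |cfDen (Real.sqrt 7) n * Real.sqrt 7 - cfNum (Real.sqrt 7) n| = A n :=
    fun n => by simp only [A, E, S7]
  simp only [hA]
  set κ : ℝ := 8 - 3*S7 with hκ
  have hf : Summable (fun k : ℕ => κ^k) := summable_geometric_of_lt_one kappa_nonneg kappa_lt_one
  have hg : Summable (fun j : Fin 4 => A j) := summable_of_finite_support (Set.toFinite _)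
  have hprod : Summable (fun p : ℕ × Fin 4 => κ^p.1 * A (p.2 : ℕ)) :=
    hf.mul_of_nonneg hg (fun k => pow_nonneg kappa_nonneg k) (fun j => abs_nonneg _)
  have h1 : ∑' n : ℕ, A n = ∑' p : ℕ × Fin 4, κ^p.1 * A (p.2 : ℕ) := by
    rw [← Equiv.tsum_eq (Nat.divModEquiv 4).symm A]
    refine tsum_congr fun p => ?_
    have : (Nat.divModEquiv 4).symm p = p.1 * 4 + (p.2 : ℕ) := rfl
    rw [this, A_formula]
  have h2 : ∑' p : ℕ × Fin 4, κ^p.1 * A (p.2 : ℕ) = (∑' k : ℕ, κ^k) * ∑' j : Fin 4, A (j:ℕ) :=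
    (Summable.tsum_mul_tsum hf hg hprod).symm
  have h3 : ∑' k : ℕ, κ^k = (1 - κ)⁻¹ := tsum_geometric_of_lt_one kappa_nonneg kappa_lt_one
  have h4 : ∑' j : Fin 4, A (j:ℕ) = 4 - S7 := by
    rw [tsum_fintype, Fin.sum_univ_four]
    have c0 : ((0:Fin 4):ℕ) = 0 := rfl
    have c1 : ((1:Fin 4):ℕ) = 1 := rfl
    have c2 : ((2:Fin 4):ℕ) = 2 := rfl
    have c3 : ((3:Fin 4):ℕ) = 3 := rfl
    rw [c0, c1, c2, c3, A0, A1, A2, A3]; ring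
  rw [h1, h2, h3, h4]
  have hne : (1:ℝ) - κ ≠ 0 := by
    have : 7 < 3*S7 := by nlinarith [s7_sq, s7_nonneg]
    rw [hκ]; intro h; nlinarith
  rw [hκ] at hne ⊢
  have h7 : S7^2 = 7 := s7_sq
  field_simp
  nlinarith [s7_sq, s7_nonneg]

end Aux
end

section
/- Let m ≥ 1 be an integer, let α = (m + √(4 + m²))/2, and let pₙ/qₙ denote the nth convergent of the regular continued fraction expansion of α. Then ∑_{n≥0} |qₙ·α − pₙ| = 1/(α − 1). -/
open Real

theorem errorSum_metallic (m : ℕ) (hm : 1 ≤ m) :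
    let α : ℝ := ((m : ℝ) + Real.sqrt (4 + (m : ℝ) ^ 2)) / 2
    (∑' n : ℕ, |cfDen α n * α - cfNum α n|) = 1 / (α - 1) := by
  intro α
  have hm' : (1:ℝ) ≤ m := by exact_mod_cast hm
  set a : ℝ := Real.sqrt (4 + (m:ℝ)^2) with ha
  have ha0 : 0 ≤ a := Real.sqrt_nonneg _
  have ha2 : a ^ 2 = 4 + (m:ℝ)^2 := Real.sq_sqrt (by positivity)
  have hma : (m:ℝ) < a := by nlinarith [sq_nonneg (a - m)]
  have ham2 : a < m + 2 := by nlinarith [sq_nonneg (a - (m+2))]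
  have hαdef : α = ((m:ℝ) + a)/2 := rfl
  have hαm : α ^ 2 = m * α + 1 := by rw [hαdef]; field_simp; nlinarith
  have hα_lb : (m:ℝ) < α := by rw [hαdef]; linarith
  have hα_ub : α < m + 1 := by rw [hαdef]; linarith
  have hα1 : 1 < α := lt_of_le_of_lt hm' hα_lb
  set β : ℝ := α - m with hβ
  have hβpos : 0 < β := by simp only [hβ]; linarith
  have hβlt : β < 1 := by simp only [hβ]; linarith
  have hβα : β * α = 1 := by simp only [hβ]; nlinarith
  have hfloor : ⌊α⌋ = (m : ℤ) := by
    rw [Int.floor_eq_iff]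
    constructor <;> push_cast <;> linarith
  have hfract : Int.fract α = β := by simp [Int.fract, hfloor, hβ]
  have hinv : β⁻¹ = α := by
    field_simp
    linarith [hβα]
  -- the sequence of partial denominators is constantly m
  have hs : ∀ n, (GenContFract.of α).s.get? n = some ⟨1, (m:ℝ)⟩ := by
    intro n
    induction n with
    | zero =>
      have h0 : Int.fract α ≠ 0 := by rw [hfract]; exact ne_of_gt hβpos
      have h1 := GenContFract.of_s_head h0
      rw [hfract, hinv, hfloor] at h1
      exact_mod_cast h1
    | succ n ih =>
      rw [GenContFract.of_s_succ, hfract, hinv]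
      exact ih
  have hnum0 : cfNum α 0 = m := by
    rw [cfNum, GenContFract.zeroth_num_eq_h, GenContFract.of_h_eq_floor, hfloor]
    norm_num
  have hden0 : cfDen α 0 = 1 := GenContFract.zeroth_den_eq_one
  have hnum1 : cfNum α 1 = m * m + 1 := by
    rw [cfNum, GenContFract.first_num_eq (hs 0), GenContFract.of_h_eq_floor, hfloor]
    norm_num
  have hden1 : cfDen α 1 = m := by
    rw [cfDen, GenContFract.first_den_eq (hs 0)]
  have hnumrec : ∀ n, cfNum α (n+2) = m * cfNum α (n+1) + cfNum α n := by
    intro n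
    have := GenContFract.nums_recurrence (hs (n+1)) rfl rfl
    simpa [cfNum] using this
  have hdenrec : ∀ n, cfDen α (n+2) = m * cfDen α (n+1) + cfDen α n := by
    intro n
    have := GenContFract.dens_recurrence (hs (n+1)) rfl rfl
    simpa [cfDen] using this
  -- error formula
  have hβsq : β ^ 2 = 1 - m * β := by simp only [hβ]; nlinarith
  have key : ∀ n, cfDen α n * α - cfNum α n = (-1)^n * β^(n+1) ∧
      cfDen α (n+1) * α - cfNum α (n+1) = (-1)^(n+1) * β^(n+2) := by
    intro n
    induction n with
    | zero =>
      constructor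
      · rw [hden0, hnum0]; simp [hβ]
      · rw [hden1, hnum1]
        simp only [hβ]
        linear_combination hαm
    | succ n ih =>
      obtain ⟨h1, h2⟩ := ih
      refine ⟨h2, ?_⟩
      rw [hnumrec, hdenrec]
      have : (m : ℝ) * (cfDen α (n+1) * α - cfNum α (n+1)) + (cfDen α n * α - cfNum α n)
          = (-1)^(n+2) * β^(n+3) := by
        rw [h1, h2]
        have hpow : β ^ (n+3) = β ^ (n+1) * β ^ 2 := by ring
        rw [hpow, hβsq]
        ring
      linarith [this]
  have habs : ∀ n, |cfDen α n * α - cfNum α n| = β^(n+1) := by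
    intro n
    rw [(key n).1, abs_mul, abs_pow, abs_pow, abs_neg, abs_one, one_pow, one_mul,
      abs_of_pos hβpos]
  rw [tsum_congr habs]
  have hgeom : ∑' n : ℕ, β ^ (n+1) = β * (1 - β)⁻¹ := by
    have : ∀ n : ℕ, β ^ (n+1) = β * β ^ n := fun n => by ring
    rw [tsum_congr this, tsum_mul_left, tsum_geometric_of_lt_one (le_of_lt hβpos) hβlt]
  rw [hgeom]
  have h1β : 1 - β = (α - 1) * β := by
    have h : α * β = 1 := by linarith [hβα]
    linear_combination (-1 : ℝ) * h
  rw [h1β, mul_comm (α - 1) β, mul_inv, ← mul_assoc, mul_inv_cancel₀ (ne_of_gt hβpos),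
    one_mul, one_div]
end

section
/- Let ℓ ≥ 2 and s ≥ 1 be integers. The regular continued fraction expansion of s·e^(1/(ℓs)) is [a₀; a₁, a₂, ...] where a₀ = s and, for every integer k ≥ 0, a_{3k+1} = (2k+1)·ℓ − 1, a_{3k+2} = 1, and a_{3k+3} = 2s − 1. -/
open Real

namespace HurwitzAux

/-- coefficient of the hypergeometric-like series -/
noncomputable def c (k n : ℕ) : ℝ :=
  ((2*k).factorial : ℝ) * (k+n).factorial / (((2*k+2*n).factorial : ℝ) * k.factorial * n.factorial)

lemma c_pos (k n : ℕ) : 0 < c k n := by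
  unfold c
  positivity

lemma nat_fact_ineq (k n : ℕ) : (2*k).factorial * (k+n).factorial ≤ (2*k+2*n).factorial * k.factorial * n.factorial := by
  induction n with
  | zero => simp [Nat.mul_comm]
  | succ n ih =>
    have h1 : (2*k+2*(n+1)).factorial = (2*k+2*n+2) * ((2*k+2*n+1) * (2*k+2*n).factorial) := by
      have : 2*k+2*(n+1) = (2*k+2*n+1) + 1 := by ring
      rw [this, Nat.factorial_succ]
      have : 2*k+2*n+1 = (2*k+2*n) + 1 := by ring
      rw [this, Nat.factorial_succ]
    have h2 : (k+(n+1)).factorial = (k+n+1) * (k+n).factorial := by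
      have : k+(n+1) = (k+n)+1 := by ring
      rw [this, Nat.factorial_succ]
    rw [h1, h2, Nat.factorial_succ]
    calc (2*k).factorial * ((k+n+1) * (k+n).factorial)
        = (k+n+1) * ((2*k).factorial * (k+n).factorial) := by ring
      _ ≤ (k+n+1) * ((2*k+2*n).factorial * k.factorial * n.factorial) := by
          exact Nat.mul_le_mul_left _ ih
      _ ≤ ((2*k+2*n+2) * ((2*k+2*n+1) * (2*k+2*n).factorial)) * k.factorial * ((n+1) * n.factorial) := by
          have hle : k+n+1 ≤ (2*k+2*n+2) * (2*k+2*n+1) * (n+1) := by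
            calc k+n+1 ≤ 2*k+2*n+2 := by omega
              _ ≤ (2*k+2*n+2) * ((2*k+2*n+1) * (n+1)) :=
                  Nat.le_mul_of_pos_right _ (Nat.mul_pos (by omega) (by omega))
              _ = (2*k+2*n+2) * (2*k+2*n+1) * (n+1) := by ring
          calc (k+n+1) * ((2*k+2*n).factorial * k.factorial * n.factorial)
              ≤ ((2*k+2*n+2) * (2*k+2*n+1) * (n+1)) * ((2*k+2*n).factorial * k.factorial * n.factorial) :=
                Nat.mul_le_mul_right _ hle
            _ = ((2*k+2*n+2) * ((2*k+2*n+1) * (2*k+2*n).factorial)) * k.factorial * ((n+1) * n.factorial) := by ring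

lemma c_le_one (k n : ℕ) : c k n ≤ 1 := by
  unfold c
  rw [div_le_one (by positivity)]
  calc ((2*k).factorial : ℝ) * (k+n).factorial
      = (((2*k).factorial * (k+n).factorial : ℕ) : ℝ) := by push_cast; ring
    _ ≤ (((2*k+2*n).factorial * k.factorial * n.factorial : ℕ) : ℝ) := by
        exact_mod_cast nat_fact_ineq k n
    _ = ((2*k+2*n).factorial : ℝ) * k.factorial * n.factorial := by push_cast; ring


/-- the key coefficient identity -/
lemma c_identity (k n : ℕ) :
    c k (n+1) = c (k+1) (n+1) + c (k+2) n / ((2*(k:ℝ)+1) * (2*(k:ℝ)+3)) := by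
  unfold c
  have e1 : ((2*k+2*(n+1)).factorial : ℝ)
      = (2*(k:ℝ)+2*n+2) * (2*(k:ℝ)+2*n+1) * ((2*k+2*n).factorial : ℝ) := by
    rw [show 2*k+2*(n+1) = ((2*k+2*n)+1)+1 by ring, Nat.factorial_succ, Nat.factorial_succ]
    push_cast; ring
  have e2 : ((2*(k+1)+2*(n+1)).factorial : ℝ)
      = (2*(k:ℝ)+2*n+4) * (2*(k:ℝ)+2*n+3) * (2*(k:ℝ)+2*n+2) * (2*(k:ℝ)+2*n+1)
        * ((2*k+2*n).factorial : ℝ) := by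
    rw [show 2*(k+1)+2*(n+1) = ((((2*k+2*n)+1)+1)+1)+1 by ring,
      Nat.factorial_succ, Nat.factorial_succ, Nat.factorial_succ, Nat.factorial_succ]
    push_cast; ring
  have e3 : ((2*(k+2)+2*n).factorial : ℝ)
      = (2*(k:ℝ)+2*n+4) * (2*(k:ℝ)+2*n+3) * (2*(k:ℝ)+2*n+2) * (2*(k:ℝ)+2*n+1)
        * ((2*k+2*n).factorial : ℝ) := by
    rw [show 2*(k+2)+2*n = ((((2*k+2*n)+1)+1)+1)+1 by ring,
      Nat.factorial_succ, Nat.factorial_succ, Nat.factorial_succ, Nat.factorial_succ]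
    push_cast; ring
  have e4 : ((2*(k+1)).factorial : ℝ) = (2*(k:ℝ)+2) * (2*(k:ℝ)+1) * ((2*k).factorial : ℝ) := by
    rw [show 2*(k+1) = ((2*k)+1)+1 by ring, Nat.factorial_succ, Nat.factorial_succ]
    push_cast; ring
  have e5 : ((2*(k+2)).factorial : ℝ)
      = (2*(k:ℝ)+4) * (2*(k:ℝ)+3) * (2*(k:ℝ)+2) * (2*(k:ℝ)+1) * ((2*k).factorial : ℝ) := by
    rw [show 2*(k+2) = ((((2*k)+1)+1)+1)+1 by ring,
      Nat.factorial_succ, Nat.factorial_succ, Nat.factorial_succ, Nat.factorial_succ]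
    push_cast; ring
  have e6 : (((k+1)+(n+1)).factorial : ℝ) = ((k:ℝ)+n+2) * ((k+(n+1)).factorial : ℝ) := by
    rw [show (k+1)+(n+1) = (k+(n+1))+1 by ring, Nat.factorial_succ]
    push_cast; ring
  have e7 : (((k+2)+n).factorial : ℝ) = ((k:ℝ)+n+2) * ((k+(n+1)).factorial : ℝ) := by
    rw [show (k+2)+n = (k+(n+1))+1 by ring, Nat.factorial_succ]
    push_cast; ring
  have e8 : ((k+1).factorial : ℝ) = ((k:ℝ)+1) * (k.factorial : ℝ) := by
    rw [Nat.factorial_succ]; push_cast; ring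
  have e9 : ((k+2).factorial : ℝ) = ((k:ℝ)+2) * ((k:ℝ)+1) * (k.factorial : ℝ) := by
    rw [show k+2 = (k+1)+1 by ring, Nat.factorial_succ, Nat.factorial_succ]
    push_cast; ring
  have e10 : ((n+1).factorial : ℝ) = ((n:ℝ)+1) * (n.factorial : ℝ) := by
    rw [Nat.factorial_succ]; push_cast; ring
  rw [e1, e2, e3, e4, e5, e6, e7, e8, e9, e10]
  have f1 : ((2*k).factorial : ℝ) ≠ 0 := by positivity
  have f2 : ((2*k+2*n).factorial : ℝ) ≠ 0 := by positivity
  have f3 : ((k+(n+1)).factorial : ℝ) ≠ 0 := by positivity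
  have f4 : (k.factorial : ℝ) ≠ 0 := by positivity
  have f5 : (n.factorial : ℝ) ≠ 0 := by positivity
  have g1 : (2*(k:ℝ)+2*n+1) ≠ 0 := by positivity
  have g2 : (2*(k:ℝ)+2*n+2) ≠ 0 := by positivity
  have g3 : (2*(k:ℝ)+2*n+3) ≠ 0 := by positivity
  have g4 : (2*(k:ℝ)+2*n+4) ≠ 0 := by positivity
  have g5 : (2*(k:ℝ)+1) ≠ 0 := by positivity
  have g6 : (2*(k:ℝ)+2) ≠ 0 := by positivity
  have g7 : (2*(k:ℝ)+3) ≠ 0 := by positivity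
  have g8 : (2*(k:ℝ)+4) ≠ 0 := by positivity
  have g9 : ((k:ℝ)+1) ≠ 0 := by positivity
  have g10 : ((k:ℝ)+2) ≠ 0 := by positivity
  have g11 : ((n:ℝ)+1) ≠ 0 := by positivity
  have g12 : ((k:ℝ)+n+2) ≠ 0 := by positivity
  field_simp
  ring

/-- The hypergeometric-like series. -/
noncomputable def F (x : ℝ) (k : ℕ) : ℝ := ∑' n : ℕ, c k n * x ^ (2*n)

lemma term_nonneg {x : ℝ} (k n : ℕ) : 0 ≤ c k n * x ^ (2*n) := by
  rw [pow_mul]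
  exact mul_nonneg (c_pos k n).le (pow_nonneg (sq_nonneg x) n)

lemma F_summable {x : ℝ} (hx0 : 0 < x) (hx1 : x < 1) (k : ℕ) :
    Summable (fun n : ℕ => c k n * x ^ (2*n)) := by
  apply Summable.of_nonneg_of_le (fun n => term_nonneg k n) (fun n => ?_)
    (summable_geometric_of_lt_one (r := x^2) (by positivity) (by nlinarith))
  calc c k n * x ^ (2*n) ≤ 1 * x ^ (2*n) := by
        apply mul_le_mul_of_nonneg_right (c_le_one k n)
        rw [pow_mul]; exact pow_nonneg (sq_nonneg x) n
    _ = (x^2)^n := by rw [one_mul, ← pow_mul]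


lemma F_pos {x : ℝ} (hx0 : 0 < x) (hx1 : x < 1) (k : ℕ) : 0 < F x k := by
  apply Summable.tsum_pos (F_summable hx0 hx1 k) (fun n => term_nonneg k n) 0
  have := c_pos k 0
  simpa using this

lemma F_rec {x : ℝ} (hx0 : 0 < x) (hx1 : x < 1) (k : ℕ) :
    F x k = F x (k+1) + x^2 / ((2*(k:ℝ)+1) * (2*(k:ℝ)+3)) * F x (k+2) := by
  have hs0 := F_summable hx0 hx1 k
  have hs1 := F_summable hx0 hx1 (k+1)
  have hs2 := F_summable hx0 hx1 (k+2)
  have hc0 : c k 0 = 1 := by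
    unfold c; simp
    exact ⟨Nat.factorial_ne_zero _, Nat.factorial_ne_zero _⟩
  have hc1 : c (k+1) 0 = 1 := by
    unfold c; simp
    exact ⟨Nat.factorial_ne_zero _, Nat.factorial_ne_zero _⟩
  have hγ : x^2 / ((2*(k:ℝ)+1) * (2*(k:ℝ)+3)) * F x (k+2)
      = ∑' n : ℕ, c (k+2) n / ((2*(k:ℝ)+1) * (2*(k:ℝ)+3)) * x ^ (2*(n+1)) := by
    rw [F, ← tsum_mul_left]
    congr 1; funext n
    have : x ^ (2*(n+1)) = x^2 * x^(2*n) := by rw [show 2*(n+1) = 2 + 2*n by ring, pow_add]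
    rw [this]; ring
  have hshift : Summable (fun n : ℕ => c (k+2) n / ((2*(k:ℝ)+1) * (2*(k:ℝ)+3)) * x ^ (2*(n+1))) := by
    have := hs2.mul_left (x^2 / ((2*(k:ℝ)+1) * (2*(k:ℝ)+3)))
    apply this.congr
    intro n
    have : x ^ (2*(n+1)) = x^2 * x^(2*n) := by rw [show 2*(n+1) = 2 + 2*n by ring, pow_add]
    rw [this]; ring
  have hsk1shift : Summable (fun n : ℕ => c (k+1) (n+1) * x ^ (2*(n+1))) :=
    hs1.comp_injective (add_left_injective 1)
  rw [F, F, Summable.tsum_eq_zero_add hs0, Summable.tsum_eq_zero_add hs1, hγ, hc0, hc1]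
  rw [add_assoc, ← Summable.tsum_add hsk1shift hshift]
  exact congrArg (HAdd.hAdd _) (tsum_congr fun n => by rw [← add_mul, ← c_identity k n])

lemma F_zero {x : ℝ} (hx0 : 0 < x) (hx1 : x < 1) : F x 0 = Real.cosh x := by
  rw [Real.cosh_eq_tsum, F]
  refine tsum_congr fun n => ?_
  unfold c
  have f1 : ((2*n).factorial : ℝ) ≠ 0 := by positivity
  have f2 : ((n).factorial : ℝ) ≠ 0 := by positivity
  rw [show (2*0 : ℕ) = 0 by ring, show (2*0+2*n : ℕ) = 2*n by ring, show (0+n : ℕ) = n by ring,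
    Nat.factorial_zero]
  field_simp

lemma F_one {x : ℝ} (hx0 : 0 < x) (hx1 : x < 1) : x * F x 1 = Real.sinh x := by
  rw [Real.sinh_eq_tsum, F, ← tsum_mul_left]
  congr 1; funext n
  unfold c
  have h1 : ((2*1+2*n).factorial : ℝ) = ((2*n+2).factorial : ℝ) := by norm_num; ring_nf
  have h2 : ((2*n+2).factorial : ℝ) = (2*(n:ℝ)+2) * ((2*n+1).factorial : ℝ) := by
    rw [show 2*n+2 = (2*n+1)+1 by ring, Nat.factorial_succ]; push_cast; ring
  have h3 : ((1+n).factorial : ℝ) = ((n:ℝ)+1) * (n.factorial : ℝ) := by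
    rw [show 1+n = n+1 by ring, Nat.factorial_succ]; push_cast; ring
  have h4 : x ^ (2*n+1) = x * x ^ (2*n) := by rw [pow_succ]; ring
  have f1 : ((2*n+1).factorial : ℝ) ≠ 0 := by positivity
  have f2 : (n.factorial : ℝ) ≠ 0 := by positivity
  rw [h1, h2, h3, h4]
  have : ((Nat.factorial (2*1) : ℕ) : ℝ) = 2 := by norm_num [Nat.factorial]
  rw [this]
  simp [Nat.factorial]
  field_simp

/-- The complete quotients of the continued fraction of coth x. -/
noncomputable def H (x : ℝ) (k : ℕ) : ℝ := (2*(k:ℝ)+1) / x * F x k / F x (k+1)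

lemma H_pos {x : ℝ} (hx0 : 0 < x) (hx1 : x < 1) (k : ℕ) : 0 < H x k := by
  unfold H
  have := F_pos hx0 hx1 k
  have := F_pos hx0 hx1 (k+1)
  positivity

lemma H_rec {x : ℝ} (hx0 : 0 < x) (hx1 : x < 1) (k : ℕ) :
    H x k = (2*(k:ℝ)+1) / x + 1 / H x (k+1) := by
  have h0 := F_pos hx0 hx1 k
  have h1 := F_pos hx0 hx1 (k+1)
  have h2 := F_pos hx0 hx1 (k+2)
  have hrec := F_rec hx0 hx1 k
  unfold H
  have hk1 : ((k:ℝ)+1) = (((k+1 : ℕ)):ℝ) := by push_cast; ring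
  have hg : (2*(k:ℝ)+1) ≠ 0 := by positivity
  have hg3 : (2*(k:ℝ)+3) ≠ 0 := by positivity
  push_cast
  rw [hrec]
  field_simp
  ring

lemma H_gt {x : ℝ} (hx0 : 0 < x) (hx1 : x < 1) (k : ℕ) : (2*(k:ℝ)+1) / x < H x k := by
  rw [H_rec hx0 hx1 k]
  have := H_pos hx0 hx1 (k+1)
  have : 0 < 1 / H x (k+1) := by positivity
  linarith

lemma H_zero {x : ℝ} (hx0 : 0 < x) (hx1 : x < 1) :
    H x 0 = (Real.exp (2*x) + 1) / (Real.exp (2*x) - 1) := by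
  have h0 := F_pos hx0 hx1 0
  have h1 := F_pos hx0 hx1 1
  have hsinh : Real.sinh x = x * F x 1 := (F_one hx0 hx1).symm
  have hcosh : Real.cosh x = F x 0 := (F_zero hx0 hx1).symm
  have hsinh_pos : 0 < Real.sinh x := by rw [hsinh]; exact mul_pos hx0 h1
  have hxne : x ≠ 0 := ne_of_gt hx0
  have hF1ne : F x 1 ≠ 0 := ne_of_gt h1
  have hkey : H x 0 = Real.cosh x / Real.sinh x := by
    unfold H
    rw [hcosh, hsinh]
    push_cast
    field_simp
    norm_num
  have hexp2 : Real.exp (2*x) = Real.exp x * Real.exp x := by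
    rw [← Real.exp_add]; ring_nf
  have hexne : Real.exp x ≠ 0 := Real.exp_ne_zero x
  have hsh : Real.exp x - (Real.exp x)⁻¹ ≠ 0 := by
    have hv : Real.sinh x = (Real.exp x - (Real.exp x)⁻¹)/2 := by
      rw [Real.sinh_eq, Real.exp_neg]
    intro hz
    rw [hv, hz] at hsinh_pos
    norm_num at hsinh_pos
  have hE1 : Real.exp x * Real.exp x - 1 ≠ 0 := by
    have hgt : 1 < Real.exp (2*x) := by
      rw [show (1:ℝ) = Real.exp 0 by rw [Real.exp_zero]]
      exact Real.exp_lt_exp.mpr (by linarith)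
    rw [hexp2] at hgt
    exact sub_ne_zero.mpr (ne_of_gt hgt)
  rw [hkey, Real.cosh_eq, Real.sinh_eq, Real.exp_neg, hexp2]
  field_simp

/-! ### The specific setting: `α = s * exp (1/(ℓ s))` -/

section Main

variable (ℓ s : ℕ)

/-- the value -/
noncomputable def alpha : ℝ := (s : ℝ) * Real.exp (1 / ((ℓ : ℝ) * (s : ℝ)))

/-- `x = 1/(2 ℓ s)` -/
noncomputable def xx : ℝ := 1 / (2 * ((ℓ : ℝ) * (s : ℝ)))

/-- the complete quotients of `coth (xx)` -/
noncomputable def HH (k : ℕ) : ℝ := H (xx ℓ s) k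

/-- the partial quotients of `α` -/
def btail (ℓ s : ℕ) : ℕ → ℕ → ℤ
  | 0, k => (2*(k:ℤ)+1)*ℓ - 1
  | 1, _ => 1
  | _+2, _ => 2*(s:ℤ) - 1

def b : ℕ → ℤ := fun n => if n = 0 then (s:ℤ) else btail ℓ s ((n-1) % 3) ((n-1)/3)

/-- the complete quotients of `α` -/
noncomputable def ttail (ℓ s : ℕ) : ℕ → ℕ → ℝ
  | 0, k => (HH ℓ s k - 1) / (2*(s:ℝ))
  | 1, k => 2*(s:ℝ) / (HH ℓ s k - (2*(k:ℝ)+1)*(2*((ℓ:ℝ)*(s:ℝ))) + 2*(s:ℝ) - 1)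
  | _+2, k => (HH ℓ s k - (2*(k:ℝ)+1)*(2*((ℓ:ℝ)*(s:ℝ))) + 2*(s:ℝ) - 1)
      / ((2*(k:ℝ)+1)*(2*((ℓ:ℝ)*(s:ℝ))) + 1 - HH ℓ s k)

noncomputable def t : ℕ → ℝ := fun n => if n = 0 then alpha ℓ s else ttail ℓ s ((n-1) % 3) ((n-1)/3)

lemma t_1 (k : ℕ) : t ℓ s (3*k+1) = ttail ℓ s 0 k := by
  have h1 : (3*k+1) - 1 = 3*k := by omega
  have h2 : (3*k) % 3 = 0 := by omega
  have h3 : (3*k) / 3 = k := by omega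
  simp only [t, h1, h2, h3, if_neg (by omega : ¬(3*k+1 = 0))]

lemma t_2 (k : ℕ) : t ℓ s (3*k+2) = ttail ℓ s 1 k := by
  have h1 : (3*k+2) - 1 = 3*k+1 := by omega
  have h2 : (3*k+1) % 3 = 1 := by omega
  have h3 : (3*k+1) / 3 = k := by omega
  simp only [t, h1, h2, h3, if_neg (by omega : ¬(3*k+2 = 0))]

lemma t_3 (k : ℕ) : t ℓ s (3*k+3) = ttail ℓ s 2 k := by
  have h1 : (3*k+3) - 1 = 3*k+2 := by omega
  have h2 : (3*k+2) % 3 = 2 := by omega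
  have h3 : (3*k+2) / 3 = k := by omega
  simp only [t, h1, h2, h3, if_neg (by omega : ¬(3*k+3 = 0))]

lemma b_1 (k : ℕ) : b ℓ s (3*k+1) = (2*(k:ℤ)+1)*ℓ - 1 := by
  have h1 : (3*k+1) - 1 = 3*k := by omega
  have h2 : (3*k) % 3 = 0 := by omega
  have h3 : (3*k) / 3 = k := by omega
  simp only [b, h1, h2, h3, if_neg (by omega : ¬(3*k+1 = 0)), btail]

lemma b_2 (k : ℕ) : b ℓ s (3*k+2) = 1 := by
  have h1 : (3*k+2) - 1 = 3*k+1 := by omega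
  have h2 : (3*k+1) % 3 = 1 := by omega
  simp only [b, h1, h2, if_neg (by omega : ¬(3*k+2 = 0)), btail]

lemma b_3 (k : ℕ) : b ℓ s (3*k+3) = 2*(s:ℤ) - 1 := by
  have h1 : (3*k+3) - 1 = 3*k+2 := by omega
  have h2 : (3*k+2) % 3 = 2 := by omega
  simp only [b, h1, h2, if_neg (by omega : ¬(3*k+3 = 0)), btail]

variable {ℓ s} (hℓ : 2 ≤ ℓ) (hs : 1 ≤ s)

section withHyp
include hℓ hs

lemma x_pos : 0 < xx ℓ s := by
  unfold xx
  have h1 : (1:ℝ) ≤ (s:ℝ) := by exact_mod_cast hs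
  have h2 : (2:ℝ) ≤ (ℓ:ℝ) := by exact_mod_cast hℓ
  positivity

lemma x_lt_one : xx ℓ s < 1 := by
  unfold xx
  have h1 : (1:ℝ) ≤ (s:ℝ) := by exact_mod_cast hs
  have h2 : (2:ℝ) ≤ (ℓ:ℝ) := by exact_mod_cast hℓ
  rw [div_lt_one (by positivity)]
  nlinarith

lemma HH_rec (k : ℕ) : HH ℓ s k = (2*(k:ℝ)+1)*(2*((ℓ:ℝ)*(s:ℝ))) + 1 / HH ℓ s (k+1) := by
  have := H_rec (x_pos hℓ hs) (x_lt_one hℓ hs) k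
  unfold HH
  rw [this]
  congr 1
  unfold xx
  have h1 : (1:ℝ) ≤ (s:ℝ) := by exact_mod_cast hs
  have h2 : (2:ℝ) ≤ (ℓ:ℝ) := by exact_mod_cast hℓ
  field_simp

lemma HH_gt (k : ℕ) : (2*(k:ℝ)+1)*(2*((ℓ:ℝ)*(s:ℝ))) < HH ℓ s k := by
  have := H_gt (x_pos hℓ hs) (x_lt_one hℓ hs) k
  unfold HH
  have h1 : (1:ℝ) ≤ (s:ℝ) := by exact_mod_cast hs
  have h2 : (2:ℝ) ≤ (ℓ:ℝ) := by exact_mod_cast hℓ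
  have : (2*(k:ℝ)+1) / (xx ℓ s) = (2*(k:ℝ)+1)*(2*((ℓ:ℝ)*(s:ℝ))) := by
    unfold xx; field_simp
  linarith [this ▸ H_gt (x_pos hℓ hs) (x_lt_one hℓ hs) k]

lemma M_ge (k : ℕ) : 2*((ℓ:ℝ)*(s:ℝ)) ≤ (2*(k:ℝ)+1)*(2*((ℓ:ℝ)*(s:ℝ))) := by
  have h1 : (1:ℝ) ≤ (s:ℝ) := by exact_mod_cast hs
  have h2 : (2:ℝ) ≤ (ℓ:ℝ) := by exact_mod_cast hℓ
  have hk0 : (0:ℝ) ≤ (k:ℝ) := Nat.cast_nonneg k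
  have hLs : (0:ℝ) ≤ 2*((ℓ:ℝ)*(s:ℝ)) := by nlinarith
  nlinarith [mul_nonneg hk0 hLs]

lemma M_ge_4s (k : ℕ) : 2*(s:ℝ) + 2 ≤ (2*(k:ℝ)+1)*(2*((ℓ:ℝ)*(s:ℝ))) := by
  have h1 : (1:ℝ) ≤ (s:ℝ) := by exact_mod_cast hs
  have h2 : (2:ℝ) ≤ (ℓ:ℝ) := by exact_mod_cast hℓ
  have hk0 : (0:ℝ) ≤ (k:ℝ) := Nat.cast_nonneg k
  have hM := M_ge hℓ hs (ℓ := ℓ) (s := s) k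
  nlinarith

lemma HH_pos (k : ℕ) : 0 < HH ℓ s k := by
  have h1 : (1:ℝ) ≤ (s:ℝ) := by exact_mod_cast hs
  have h2 : (2:ℝ) ≤ (ℓ:ℝ) := by exact_mod_cast hℓ
  have := HH_gt hℓ hs k
  have hM := M_ge_4s hℓ hs (ℓ := ℓ) (s := s) k
  linarith

lemma HH_big (k : ℕ) : 4 ≤ HH ℓ s k := by
  have h1 : (1:ℝ) ≤ (s:ℝ) := by exact_mod_cast hs
  have h2 : (2:ℝ) ≤ (ℓ:ℝ) := by exact_mod_cast hℓ
  have := HH_gt hℓ hs k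
  have hM := M_ge_4s hℓ hs (ℓ := ℓ) (s := s) k
  linarith

lemma HH_inv_lt_one (k : ℕ) : 1 / HH ℓ s (k+1) < 1 := by
  have := HH_big hℓ hs (k+1)
  rw [div_lt_one (by linarith)]
  linarith

lemma HH_inv_pos (k : ℕ) : 0 < 1 / HH ℓ s (k+1) := by
  have := HH_pos hℓ hs (k+1)
  positivity

lemma HH_zero : HH ℓ s 0 = (Real.exp (1/((ℓ:ℝ)*(s:ℝ))) + 1) / (Real.exp (1/((ℓ:ℝ)*(s:ℝ))) - 1) := by
  have h1 : (1:ℝ) ≤ (s:ℝ) := by exact_mod_cast hs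
  have h2 : (2:ℝ) ≤ (ℓ:ℝ) := by exact_mod_cast hℓ
  have := H_zero (x_pos hℓ hs) (x_lt_one hℓ hs)
  unfold HH
  rw [this]
  have : 2 * xx ℓ s = 1/((ℓ:ℝ)*(s:ℝ)) := by
    unfold xx; field_simp
  rw [this]

lemma t_gt_one (n : ℕ) : 1 < t ℓ s (n+1) := by
  have h1 : (1:ℝ) ≤ (s:ℝ) := by exact_mod_cast hs
  have h2 : (2:ℝ) ≤ (ℓ:ℝ) := by exact_mod_cast hℓ
  obtain ⟨k, r, hr, rfl⟩ : ∃ k r, r < 3 ∧ n = 3*k + r := ⟨n/3, n%3, by omega, by omega⟩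
  have hrec := HH_rec hℓ hs (ℓ := ℓ) (s := s) k
  have hinvlt := HH_inv_lt_one hℓ hs (ℓ := ℓ) (s := s) k
  have hinvpos := HH_inv_pos hℓ hs (ℓ := ℓ) (s := s) k
  have hM := M_ge_4s hℓ hs (ℓ := ℓ) (s := s) k
  interval_cases r
  · rw [show 3*k+0+1 = 3*k+1 by ring, t_1, ttail]
    rw [lt_div_iff₀ (by linarith : (0:ℝ) < 2*(s:ℝ))]
    linarith
  · rw [show 3*k+1+1 = 3*k+2 by ring, t_2, ttail]
    rw [lt_div_iff₀ (by linarith : (0:ℝ) < HH ℓ s k - (2*(k:ℝ)+1)*(2*((ℓ:ℝ)*(s:ℝ))) + 2*(s:ℝ) - 1)]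
    linarith
  · rw [show 3*k+2+1 = 3*k+3 by ring, t_3, ttail]
    rw [lt_div_iff₀ (by linarith : (0:ℝ) < (2*(k:ℝ)+1)*(2*((ℓ:ℝ)*(s:ℝ))) + 1 - HH ℓ s k)]
    linarith

lemma t_rec (n : ℕ) : t ℓ s n = (b ℓ s n : ℝ) + (t ℓ s (n+1))⁻¹ := by
  have h1 : (1:ℝ) ≤ (s:ℝ) := by exact_mod_cast hs
  have h2 : (2:ℝ) ≤ (ℓ:ℝ) := by exact_mod_cast hℓ
  have hsne : (2*(s:ℝ)) ≠ 0 := by positivity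
  rcases Nat.eq_zero_or_pos n with rfl | hn
  · have hE : 1 < Real.exp (1/((ℓ:ℝ)*(s:ℝ))) := by
      rw [show (1:ℝ) = Real.exp 0 by rw [Real.exp_zero]]
      apply Real.exp_lt_exp.mpr
      positivity
    rw [show (0:ℕ)+1 = 3*0+1 by ring, t_1, ttail]
    have hb : b ℓ s 0 = (s:ℤ) := by simp [b]
    have ht0 : t ℓ s 0 = alpha ℓ s := by simp [t]
    rw [ht0, hb, HH_zero hℓ hs]
    unfold alpha
    set E := Real.exp (1/((ℓ:ℝ)*(s:ℝ))) with hEd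
    have hE1 : E - 1 > 0 := by linarith
    have hden : ((E+1)/(E-1) - 1) > 0 := by
      rw [gt_iff_lt, lt_sub_iff_add_lt, zero_add, lt_div_iff₀ hE1]
      linarith
    rw [inv_div]
    push_cast
    field_simp
    ring
  · obtain ⟨k, r, hr, rfl⟩ : ∃ k r, r < 3 ∧ n = 3*k + r + 1 :=
      ⟨(n-1)/3, (n-1)%3, by omega, by omega⟩
    have hrec := HH_rec hℓ hs (ℓ := ℓ) (s := s) k
    have hinvlt := HH_inv_lt_one hℓ hs (ℓ := ℓ) (s := s) k
    have hinvpos := HH_inv_pos hℓ hs (ℓ := ℓ) (s := s) k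
    have hM := M_ge_4s hℓ hs (ℓ := ℓ) (s := s) k
    have hG'pos : 0 < HH ℓ s (k+1) := HH_pos hℓ hs (k+1)
    have hG'big : 4 ≤ HH ℓ s (k+1) := HH_big hℓ hs (k+1)
    have hG'ne : HH ℓ s (k+1) ≠ 0 := ne_of_gt hG'pos
    have hG'1ne : HH ℓ s (k+1) - 1 ≠ 0 := by
      intro hz; rw [sub_eq_zero] at hz; rw [hz] at hG'big; linarith
    interval_cases r
    · -- n = 3k+1
      rw [show 3*k+0+1 = 3*k+1 by ring, show 3*k+1+1 = 3*k+2 by ring, t_1, t_2, b_1, ttail, ttail]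
      push_cast
      rw [inv_div]
      field_simp
      ring
    · -- n = 3k+2
      rw [show 3*k+1+1 = 3*k+2 by ring, show 3*k+2+1 = 3*k+3 by ring, t_2, t_3, b_2, ttail, ttail]
      have hD2ne : HH ℓ s k - (2*(k:ℝ)+1)*(2*((ℓ:ℝ)*(s:ℝ))) + 2*(s:ℝ) - 1 ≠ 0 := by
        have : 0 < HH ℓ s k - (2*(k:ℝ)+1)*(2*((ℓ:ℝ)*(s:ℝ))) + 2*(s:ℝ) - 1 := by linarith
        exact ne_of_gt this
      push_cast
      rw [inv_div]
      rw [one_add_div hD2ne]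
      congr 1
      ring
    · -- n = 3k+3
      rw [show 3*k+2+1 = 3*k+3 by ring, show 3*k+3+1 = 3*(k+1)+1 by ring, t_3, t_1, b_3, ttail, ttail]
      push_cast
      rw [inv_div]
      have hD3pos : 0 < (2*(k:ℝ)+1)*(2*((ℓ:ℝ)*(s:ℝ))) + 1 - HH ℓ s k := by linarith
      rw [div_eq_iff (ne_of_gt hD3pos), hrec]
      field_simp
      ring

lemma floor_fract (n : ℕ) : ⌊t ℓ s n⌋ = b ℓ s n ∧ Int.fract (t ℓ s n) = (t ℓ s (n+1))⁻¹ := by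
  have hrec := t_rec hℓ hs n
  have hgt := t_gt_one hℓ hs n
  have hpos : 0 < (t ℓ s (n+1))⁻¹ := by positivity
  have hlt : (t ℓ s (n+1))⁻¹ < 1 := by
    rw [inv_lt_one_iff₀]; right; exact hgt
  have hfl : ⌊t ℓ s n⌋ = b ℓ s n := by
    rw [Int.floor_eq_iff]
    constructor
    · rw [hrec]; linarith
    · rw [hrec]; push_cast; linarith
  refine ⟨hfl, ?_⟩
  rw [Int.fract, hfl, hrec]
  push_cast
  ring

lemma stream_eq (n : ℕ) :
    GenContFract.IntFractPair.stream (alpha ℓ s) n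
      = some ⟨b ℓ s n, (t ℓ s (n+1))⁻¹⟩ := by
  induction n with
  | zero =>
    rw [GenContFract.IntFractPair.stream_zero]
    have := floor_fract hℓ hs 0
    have ht0 : t ℓ s 0 = alpha ℓ s := by simp [t]
    rw [ht0] at this
    unfold GenContFract.IntFractPair.of
    rw [this.1, this.2]
  | succ n ih =>
    have hgt := t_gt_one hℓ hs n
    have hfr : ((t ℓ s (n+1))⁻¹ : ℝ) ≠ 0 := by positivity
    have := GenContFract.IntFractPair.stream_succ_of_some ih hfr
    rw [this]
    have hinv : ((t ℓ s (n+1))⁻¹)⁻¹ = t ℓ s (n+1) := inv_inv _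
    have hff := floor_fract hℓ hs (n+1)
    unfold GenContFract.IntFractPair.of
    simp only [hinv]
    rw [hff.1, hff.2]

end withHyp

end Main

end HurwitzAux

open HurwitzAux in
theorem contFract_of_s_exp_one_div_ls (ℓ s : ℕ) (hℓ : 2 ≤ ℓ) (hs : 1 ≤ s) :
    let α : ℝ := (s : ℝ) * Real.exp (1 / ((ℓ : ℝ) * (s : ℝ)))
    (GenContFract.of α).h = (s : ℝ) ∧
      ∀ k : ℕ,
        (GenContFract.of α).partDens.get? (3 * k) =
            some ((2 * (k : ℝ) + 1) * (ℓ : ℝ) - 1) ∧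
        (GenContFract.of α).partDens.get? (3 * k + 1) = some 1 ∧
        (GenContFract.of α).partDens.get? (3 * k + 2) = some (2 * (s : ℝ) - 1) := by
  intro α
  have hα : α = alpha ℓ s := rfl
  have hden : ∀ n : ℕ, (GenContFract.of α).partDens.get? n = some ((b ℓ s (n+1) : ℤ) : ℝ) := by
    intro n
    have hst := stream_eq hℓ hs (n+1)
    rw [← hα] at hst
    have hsnth := GenContFract.get?_of_eq_some_of_succ_get?_intFractPair_stream hst
    exact GenContFract.partDen_eq_s_b hsnth
  constructor
  · rw [GenContFract.of_h_eq_floor, hα]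
    have := (floor_fract hℓ hs 0).1
    have ht0 : t ℓ s 0 = alpha ℓ s := by simp [t]
    rw [ht0] at this
    rw [this]
    simp [b]
  · intro k
    refine ⟨?_, ?_, ?_⟩
    · rw [hden (3*k), show 3*k+1 = 3*k+1 from rfl, b_1]
      push_cast
      ring_nf
    · rw [hden (3*k+1), show 3*k+1+1 = 3*k+2 from rfl, b_2]
      norm_num
    · rw [hden (3*k+2), show 3*k+2+1 = 3*k+3 from rfl, b_3]
      push_cast
      ring_nf
end

section
/- Let ℓ ≥ 2 and s ≥ 1 be integers and let pₙ/qₙ denote the nth convergent of the regular continued fraction expansion of s·e^(1/(ℓs)). Then for every integer n ≥ 0: (i) p_{3n} − s·e^(1/(ℓs))·q_{3n} = −(1/(ℓs)^(n+1)) · ∫₀¹ (xⁿ(x−1)ⁿ/n!) · s·e^(x/(ℓs)) dx; (ii) p_{3n+1} − s·e^(1/(ℓs))·q_{3n+1} = (1/(s·(ℓs)^(n+1))) · ∫₀¹ ((x+s−1)·xⁿ(x−1)ⁿ/n!) · s·e^(x/(ℓs)) dx; (iii) p_{3n+2} − s·e^(1/(ℓs))·q_{3n+2} = (1/(s·(ℓs)^(n+1)))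 · ∫₀¹ (xⁿ(x−1)^(n+1)/n!) · s·e^(x/(ℓs)) dx. -/
open Real

open MeasureTheory intervalIntegral


section Toolkit
variable (c : ℝ)

lemma kmt_intg (f : ℝ → ℝ) (hf : Continuous f) :
    IntervalIntegrable (fun x => f x * Real.exp (x / c)) volume 0 1 :=
  (hf.mul ((Real.continuous_exp).comp (continuous_id.div_const c))).intervalIntegrable _ _

/-- linear combination under the integral -/
lemma kmt_comb (a b : ℝ) (f g h : ℝ → ℝ) (hf : Continuous f) (hg : Continuous g)
    (heq : ∀ x, h x = a * (f x * Real.exp (x / c)) + b * (g x * Real.exp (x / c))) :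
    ∫ x in (0:ℝ)..1, h x
      = a * (∫ x in (0:ℝ)..1, f x * Real.exp (x / c))
        + b * ∫ x in (0:ℝ)..1, g x * Real.exp (x / c) := by
  rw [intervalIntegral.integral_congr (g := fun x => a * (f x * Real.exp (x / c))
        + b * (g x * Real.exp (x / c))) (fun x _ => heq x)]
  rw [intervalIntegral.integral_add ((kmt_intg c f hf).const_mul a)
    ((kmt_intg c g hg).const_mul b), intervalIntegral.integral_const_mul,
    intervalIntegral.integral_const_mul]

lemma kmt_scale (a : ℝ) (f h : ℝ → ℝ) (hf : Continuous f)
    (heq : ∀ x, h x = a * (f x * Real.exp (x / c))) :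
    ∫ x in (0:ℝ)..1, h x = a * ∫ x in (0:ℝ)..1, f x * Real.exp (x / c) := by
  have := kmt_comb c a 0 f f h hf hf (by intro x; rw [heq x]; ring)
  simpa using this

lemma kmt_ibp (F F' : ℝ → ℝ) (hd : ∀ x, HasDerivAt F (F' x) x)
    (hF : Continuous F) (hF' : Continuous F') (h0 : F 0 = 0) (h1 : F 1 = 0) :
    ∫ x in (0:ℝ)..1, F' x * Real.exp (x / c)
      = -(1/c) * ∫ x in (0:ℝ)..1, F x * Real.exp (x / c) := by
  have hG : ∀ x, HasDerivAt (fun y => F y * Real.exp (y / c))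
      (F' x * Real.exp (x / c) + F x * (Real.exp (x / c) * (1/c))) x := by
    intro x
    have h1 : HasDerivAt (fun y : ℝ => y / c) (1/c) x := by
      simpa using (hasDerivAt_id x).div_const c
    exact (hd x).mul (h1.exp)
  have key : ∫ x in (0:ℝ)..1,
      (F' x * Real.exp (x / c) + F x * (Real.exp (x / c) * (1/c))) = 0 := by
    rw [intervalIntegral.integral_eq_sub_of_hasDerivAt (fun x _ => hG x)]
    · simp [h0, h1]
    · apply Continuous.intervalIntegrable; continuity
  have hsplit := kmt_comb c 1 (1/c) F' F
    (fun x => F' x * Real.exp (x / c) + F x * (Real.exp (x / c) * (1/c))) hF' hF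
    (by intro x; ring)
  rw [hsplit] at key
  linarith [key]

lemma kmt_pos (f : ℝ → ℝ) (hf : Continuous f) (hpos : ∀ x ∈ Set.Ioo (0:ℝ) 1, 0 < f x) :
    0 < ∫ x in (0:ℝ)..1, f x * Real.exp (x / c) :=
  intervalIntegral.intervalIntegral_pos_of_pos_on (kmt_intg c f hf)
    (fun x hx => mul_pos (hpos x hx) (Real.exp_pos _)) one_pos

end Toolkit


noncomputable def KU (c : ℝ) (n : ℕ) : ℝ := ∫ x in (0:ℝ)..1, x^n * (x-1)^n * Real.exp (x/c)
noncomputable def KV (c : ℝ) (n : ℕ) : ℝ := ∫ x in (0:ℝ)..1, x^n * (x-1)^(n+1) * Real.exp (x/c)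
noncomputable def KW (c : ℝ) (n : ℕ) : ℝ := ∫ x in (0:ℝ)..1, x^(n+1) * (x-1)^n * Real.exp (x/c)

lemma KW_eq (c : ℝ) (n : ℕ) : KW c n = KV c n + KU c n := by
  have h := kmt_comb c 1 1 (fun x => x^n * (x-1)^(n+1)) (fun x => x^n * (x-1)^n)
    (fun x => x^(n+1) * (x-1)^n * Real.exp (x/c)) (by continuity) (by continuity)
    (by intro x; ring)
  simpa [KU, KV, KW] using h


section rel
variable (c : ℝ) (n : ℕ)

lemma hasDerivAt_xp (m k : ℕ) (x : ℝ) :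
    HasDerivAt (fun y : ℝ => y^(m+1) * (y-1)^(k+1))
      (((m:ℝ)+1) * (x^m * (x-1)^(k+1)) + ((k:ℝ)+1) * (x^(m+1) * (x-1)^k)) x := by
  have h1 := hasDerivAt_pow (m+1) x
  have h2 := ((hasDerivAt_id x).sub_const 1).pow (k+1)
  have := h1.mul h2
  refine this.congr_deriv ?_
  simp only [Nat.add_sub_cancel, id_eq, mul_one, Pi.pow_apply]
  push_cast
  ring

lemma R1 : ((n:ℝ)+1) * (KV c n + KW c n) = -(1/c) * KU c (n+1) := by
  have hibp := kmt_ibp c (fun x => x^(n+1) * (x-1)^(n+1))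
    (fun x => ((n:ℝ)+1) * (x^n * (x-1)^(n+1)) + ((n:ℝ)+1) * (x^(n+1) * (x-1)^n))
    (fun x => hasDerivAt_xp n n x) (by continuity) (by continuity) (by simp) (by simp)
  have hcomb := kmt_comb c ((n:ℝ)+1) ((n:ℝ)+1)
    (fun x => x^n * (x-1)^(n+1)) (fun x => x^(n+1) * (x-1)^n)
    (fun x => (((n:ℝ)+1) * (x^n * (x-1)^(n+1)) + ((n:ℝ)+1) * (x^(n+1) * (x-1)^n))
        * Real.exp (x/c))
    (by continuity) (by continuity) (by intro x; ring)
  rw [hcomb] at hibp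
  rw [KU, KV, KW]
  linarith [hibp]

lemma R2 (hc : c ≠ 0) : KV c (n+1) = c * ((n:ℝ)+1) * KV c n - (2*(n:ℝ)+3) * c * KU c (n+1) := by
  have hibp := kmt_ibp c (fun x => x^(n+1) * (x-1)^(n+1+1))
    (fun x => ((n:ℝ)+1) * (x^n * (x-1)^(n+1+1)) + (((n+1:ℕ):ℝ)+1) * (x^(n+1) * (x-1)^(n+1)))
    (fun x => hasDerivAt_xp n (n+1) x) (by continuity) (by continuity)
    (by simp) (by simp)
  have hcomb := kmt_comb c (2*(n:ℝ)+3) (-((n:ℝ)+1))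
    (fun x => x^(n+1) * (x-1)^(n+1)) (fun x => x^n * (x-1)^(n+1))
    (fun x => (((n:ℝ)+1) * (x^n * (x-1)^(n+1+1)) + (((n+1:ℕ):ℝ)+1) * (x^(n+1) * (x-1)^(n+1)))
        * Real.exp (x/c))
    (by continuity) (by continuity) (by intro x; push_cast; ring)
  rw [hcomb] at hibp
  have hKV1 : KV c (n+1) = ∫ x in (0:ℝ)..1, x^(n+1) * (x-1) ^(n+2) * Real.exp (x/c) := rfl
  rw [hKV1, KU, KV]
  field_simp at hibp
  linarith [hibp]

end rel



section rel
variable {c : ℝ} (hc : c ≠ 0) (n : ℕ)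

lemma hasDerivAt_expc (x : ℝ) : HasDerivAt (fun y : ℝ => Real.exp (y / c)) (Real.exp (x/c) * (1/c)) x := by
  have h1 : HasDerivAt (fun y : ℝ => y / c) (1/c) x := by
    simpa using (hasDerivAt_id x).div_const c
  exact h1.exp

include hc in
lemma KU0 : KU c 0 = c * (Real.exp (1/c) - 1) := by
  have hd : ∀ x : ℝ, HasDerivAt (fun y : ℝ => c * Real.exp (y / c))
      (x^0 * (x-1)^0 * Real.exp (x/c)) x := by
    intro x
    have := (hasDerivAt_expc (c := c) x).const_mul c
    refine this.congr_deriv ?_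
    field_simp
  have := intervalIntegral.integral_eq_sub_of_hasDerivAt (f := fun y : ℝ => c * Real.exp (y / c))
    (a := 0) (b := 1) (fun x _ => hd x) (by apply Continuous.intervalIntegrable; continuity)
  rw [KU, this]
  simp [mul_sub]

include hc in
lemma KW0 : KW c 0 = c * Real.exp (1/c) - c^2 * (Real.exp (1/c) - 1) := by
  unfold KW
  have hd : ∀ x : ℝ, HasDerivAt (fun y : ℝ => (c * y - c^2) * Real.exp (y / c))
      (x^(0+1) * (x-1)^0 * Real.exp (x/c)) x := by
    intro x
    have h1 : HasDerivAt (fun y : ℝ => c * y - c^2) c x := by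
      simpa using ((hasDerivAt_id x).const_mul c).sub_const (c^2)
    have := h1.mul (hasDerivAt_expc (c := c) x)
    refine this.congr_deriv ?_
    field_simp
    ring
  have := intervalIntegral.integral_eq_sub_of_hasDerivAt
    (f := fun y : ℝ => (c * y - c^2) * Real.exp (y / c))
    (a := 0) (b := 1) (fun x _ => hd x) (by apply Continuous.intervalIntegrable; continuity)
  rw [this]
  simp
  ring

end rel


section pos
variable (c : ℝ) (n : ℕ)

lemma kmt_posmk (m k : ℕ) : 0 < ∫ x in (0:ℝ)..1, x^m * (1-x)^k * Real.exp (x/c) :=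
  kmt_pos c _ (by continuity)
    (fun x hx => mul_pos (pow_pos hx.1 m) (pow_pos (by linarith [hx.2]) k))

lemma posU : 0 < (-1:ℝ)^n * KU c n := by
  have h := kmt_scale c ((-1:ℝ)^n) (fun x => x^n * (x-1)^n)
    (fun x => x^n * (1-x)^n * Real.exp (x/c)) (by continuity)
    (by intro x; beta_reduce; rw [show ((1:ℝ)-x) = -1*(x-1) by ring, mul_pow]; ring)
  rw [← KU] at h
  rw [← h]; exact kmt_posmk c n n

lemma posV : 0 < (-1:ℝ)^(n+1) * KV c n := by
  have h := kmt_scale c ((-1:ℝ)^(n+1)) (fun x => x^n * (x-1)^(n+1))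
    (fun x => x^n * (1-x)^(n+1) * Real.exp (x/c)) (by continuity)
    (by intro x; beta_reduce; rw [show ((1:ℝ)-x) = -1*(x-1) by ring, mul_pow]; ring)
  rw [← KV] at h
  rw [← h]; exact kmt_posmk c n (n+1)

lemma posW : 0 < (-1:ℝ)^n * KW c n := by
  have h := kmt_scale c ((-1:ℝ)^n) (fun x => x^(n+1) * (x-1)^n)
    (fun x => x^(n+1) * (1-x)^n * Real.exp (x/c)) (by continuity)
    (by intro x; beta_reduce; rw [show ((1:ℝ)-x) = -1*(x-1) by ring, mul_pow]; ring)
  rw [← KW] at h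
  rw [← h]; exact kmt_posmk c (n+1) n

lemma posVU : (-1:ℝ)^(n+1) * KU c (n+1) < (-1:ℝ)^(n+1) * KV c n := by
  have h := kmt_comb c ((-1:ℝ)^(n+1)) (-((-1:ℝ)^(n+1)))
    (fun x => x^n * (x-1)^(n+1)) (fun x => x^(n+1) * (x-1)^(n+1))
    (fun x => x^n * (1-x)^(n+1+1) * Real.exp (x/c)) (by continuity) (by continuity)
    (by intro x; beta_reduce; rw [show ((1:ℝ)-x) = -1*(x-1) by ring, mul_pow]; ring)
  rw [← KV, ← KU] at h
  have := kmt_posmk c n (n+1+1)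
  rw [h] at this
  linarith

lemma exp_bound {c s : ℝ} (hs : 1 ≤ s) (hcs : s + 1 ≤ c) : s * (Real.exp (1/c) - 1) < 1 := by
  have hc : 0 < c := by linarith
  have h := Real.add_one_lt_exp (x := -(1/c)) (neg_ne_zero.mpr (by positivity))
  rw [Real.exp_neg] at h
  have hE : 0 < Real.exp (1/c) := Real.exp_pos _
  have h2 : (-(1/c)+1) * Real.exp (1/c) < 1 := by
    calc (-(1/c)+1) * Real.exp (1/c) < (Real.exp (1/c))⁻¹ * Real.exp (1/c) := by
          exact mul_lt_mul_of_pos_right h hE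
      _ = 1 := inv_mul_cancel₀ (ne_of_gt hE)
  have hE1 : 1 < Real.exp (1/c) := by
    have h5 := Real.add_one_lt_exp (x := 1/c) (by positivity)
    have h6 : 0 < 1/c := by positivity
    linarith
  have key : (c-1)*(Real.exp (1/c)-1) < 1 := by
    have h3 : (-(1/c)+1) * Real.exp (1/c) * c < 1 * c := mul_lt_mul_of_pos_right h2 hc
    have h4 : (1/c) * c = 1 := by field_simp
    nlinarith [h3, h4]
  have hmono : s*(Real.exp (1/c)-1) ≤ (c-1)*(Real.exp (1/c)-1) :=
    mul_le_mul_of_nonneg_right (by linarith) (by linarith)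
  linarith

end pos


/-- partial denominators -/
def kmtB (ℓ s : ℕ) (k : ℕ) : ℤ :=
  if k = 0 then s else if k % 3 = 1 then ((2*(k/3)+1)*ℓ : ℕ) - 1 else if k % 3 = 2 then 1 else 2*s - 1

lemma kmtB_zero (ℓ s : ℕ) : kmtB ℓ s 0 = s := by simp [kmtB]
lemma kmtB_one3 (ℓ s n : ℕ) : kmtB ℓ s (3*n+1) = (2*n+1)*ℓ - 1 := by
  have h1 : (3*n+1) % 3 = 1 := by omega
  have h2 : (3*n+1)/3 = n := by omega
  unfold kmtB
  rw [if_neg (by omega), if_pos h1, h2]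
  push_cast
  ring
lemma kmtB_two3 (ℓ s n : ℕ) : kmtB ℓ s (3*n+2) = 1 := by
  have h1 : (3*n+2) % 3 = 2 := by omega
  unfold kmtB
  rw [if_neg (by omega), if_neg (by omega), if_pos h1]
lemma kmtB_three3 (ℓ s n : ℕ) : kmtB ℓ s (3*n+3) = 2*s - 1 := by
  have h1 : (3*n+3) % 3 = 0 := by omega
  unfold kmtB
  rw [if_neg (by omega), if_neg (by omega), if_neg (by omega)]

/-- second-order recursion -/
noncomputable def kmtP (x0 x1 : ℝ) (b : ℕ → ℤ) : ℕ → ℝ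
  | 0 => x0
  | 1 => x1
  | (k+2) => (b k : ℝ) * kmtP x0 x1 b (k+1) + kmtP x0 x1 b k

/-- bridge: if the complete quotients are `ζ`, the CF algorithm follows them -/
lemma kmt_bridge (ζ : ℕ → ℝ)
    (hfr : ∀ k, Int.fract (ζ k) ≠ 0) (hnext : ∀ k, (Int.fract (ζ k))⁻¹ = ζ (k+1)) :
    ∀ k j, (GenContFract.of (ζ j)).s.get? k = some ⟨1, (⌊ζ (j+k+1)⌋ : ℝ)⟩ := by
  intro k
  induction k with
  | zero =>
    intro j
    have h := GenContFract.of_s_head (hfr j)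
    rw [hnext j] at h
    exact h
  | succ k ih =>
    intro j
    rw [GenContFract.of_s_succ, hnext j]
    have := ih (j+1)
    rw [show j+1+k+1 = j+(k+1)+1 by omega] at this
    exact this


set_option maxHeartbeats 2000000 in
lemma kmt_main (ℓ s : ℕ) (hℓ : 2 ≤ ℓ) (hs : 1 ≤ s) (c : ℝ) (hcd : c = (ℓ:ℝ)*(s:ℝ))
    (α : ℝ) (hα : α = (s:ℝ) * Real.exp (1/c)) : ∀ n : ℕ,
    ((GenContFract.of α).nums (3*n) - α * (GenContFract.of α).dens (3*n)
        = -((s:ℝ) * KU c n)/(c^(n+1) * n.factorial)) ∧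
    ((GenContFract.of α).nums (3*n+1) - α * (GenContFract.of α).dens (3*n+1)
        = (KW c n + ((s:ℝ)-1) * KU c n)/(c^(n+1) * n.factorial)) ∧
    ((GenContFract.of α).nums (3*n+2) - α * (GenContFract.of α).dens (3*n+2)
        = KV c n/(c^(n+1) * n.factorial)) := by
  -- basic facts
  have hs1 : (1:ℝ) ≤ (s:ℝ) := by exact_mod_cast hs
  have hℓ2 : (2:ℝ) ≤ (ℓ:ℝ) := by exact_mod_cast hℓ
  have hspos : (0:ℝ) < (s:ℝ) := by linarith
  have hcs : (s:ℝ) + 1 ≤ c := by rw [hcd]; nlinarith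
  have hcpos : (0:ℝ) < c := by linarith
  have hc0 : c ≠ 0 := ne_of_gt hcpos
  set b : ℕ → ℤ := kmtB ℓ s with hb
  set P : ℕ → ℝ := kmtP 0 1 b with hP
  set Q : ℕ → ℝ := kmtP 1 0 b with hQ
  set D : ℕ → ℝ := fun k => P k - α * Q k with hD
  have Drec : ∀ k, D (k+2) = (b k : ℝ) * D (k+1) + D k := by
    intro k; simp only [hD, hP, hQ, kmtP]; ring
  have D0 : D 0 = -α := by simp [hD, hP, hQ, kmtP]
  have D1 : D 1 = 1 := by simp [hD, hP, hQ, kmtP]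
  have D2 : D 2 = (s:ℝ) - α := by
    have := Drec 0
    rw [D0, D1, hb, kmtB_zero] at this
    simpa [sub_eq_add_neg] using this
  -- closed forms
  have hKV0 : KV c 0 = KW c 0 - KU c 0 := by linarith [KW_eq c 0]
  have cf : ∀ n : ℕ, D (3*n+2) = -((s:ℝ) * KU c n)/(c^(n+1) * n.factorial)
      ∧ D (3*n+3) = (KW c n + ((s:ℝ)-1) * KU c n)/(c^(n+1) * n.factorial)
      ∧ D (3*n+4) = KV c n/(c^(n+1) * n.factorial) := by
    intro n
    induction n with
    | zero =>
      have e2 : D 2 = -((s:ℝ) * KU c 0)/(c^(0+1) * Nat.factorial 0) := by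
        rw [D2, KU0 hc0, hα]
        simp only [Nat.factorial_zero, Nat.cast_one, mul_one, pow_one]
        field_simp
        ring
      have e3 : D 3 = (KW c 0 + ((s:ℝ)-1) * KU c 0)/(c^(0+1) * Nat.factorial 0) := by
        have hd := Drec 1
        norm_num at hd
        have hb1 : (b 1 : ℝ) = (ℓ:ℝ) - 1 := by
          rw [hb, show (1:ℕ) = 3*0+1 by norm_num, kmtB_one3]
          push_cast
          ring
        rw [hd, hb1, D2, D1, KW0 hc0, KU0 hc0, hα, hcd]
        have hs0 : (s:ℝ) ≠ 0 := ne_of_gt hspos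
        have hl0 : (ℓ:ℝ) ≠ 0 := by positivity
        simp only [Nat.factorial_zero, Nat.cast_one, mul_one, pow_one]
        field_simp
        ring
      have e4 : D 4 = KV c 0/(c^(0+1) * Nat.factorial 0) := by
        have hd := Drec 2
        norm_num at hd
        have hb2 : (b 2 : ℝ) = 1 := by
          rw [hb, show (2:ℕ) = 3*0+2 by norm_num, kmtB_two3]
          norm_num
        rw [hd, hb2, e3, e2, hKV0]
        simp only [Nat.factorial_zero, Nat.cast_one, mul_one, pow_one]
        field_simp
        ring
      refine ⟨by simpa using e2, by simpa using e3, by simpa using e4⟩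
    | succ n ih =>
      have hfac : ((n+1).factorial : ℝ) = ((n:ℝ)+1) * (n.factorial : ℝ) := by
        rw [Nat.factorial_succ]; push_cast; ring
      have hfacne : (n.factorial : ℝ) ≠ 0 := by positivity
      have hKU1 : KU c (n+1) = -(c*((n:ℝ)+1)) * (KV c n + KW c n) := by
        have hR := R1 c n
        field_simp at hR ⊢
        linarith
      have e5 : D (3*(n+1)+2) = -((s:ℝ) * KU c (n+1))/(c^(n+1+1) * Nat.factorial (n+1)) := by
        have hd := Drec (3*n+3)
        rw [show 3*n+3+2 = 3*(n+1)+2 by omega, show 3*n+3+1 = 3*n+4 by omega] at hd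
        have hb3 : (b (3*n+3) : ℝ) = 2*(s:ℝ) - 1 := by
          rw [hb, kmtB_three3]; push_cast; ring
        rw [hd, hb3, ih.2.2, ih.2.1, hKU1, KW_eq c n, hfac, pow_succ]
        field_simp
        ring
      have e6 : D (3*(n+1)+3) = (KW c (n+1) + ((s:ℝ)-1) * KU c (n+1))/(c^(n+1+1) * Nat.factorial (n+1)) := by
        have hd := Drec (3*n+4)
        rw [show 3*n+4+2 = 3*(n+1)+3 by omega, show 3*n+4+1 = 3*(n+1)+2 by omega] at hd
        have hb4 : (b (3*n+4) : ℝ) = (2*(n:ℝ)+3)*(ℓ:ℝ) - 1 := by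
          rw [hb, show 3*n+4 = 3*(n+1)+1 by omega, kmtB_one3]; push_cast; ring
        rw [hd, hb4, e5, ih.2.2, KW_eq c (n+1), R2 c n hc0, hfac, pow_succ]
        have hs0 : (s:ℝ) ≠ 0 := ne_of_gt hspos
        have hl0 : (ℓ:ℝ) ≠ 0 := by positivity
        rw [hcd]
        field_simp
        ring
      have e7 : D (3*(n+1)+4) = KV c (n+1)/(c^(n+1+1) * Nat.factorial (n+1)) := by
        have hd := Drec (3*n+5)
        rw [show 3*n+5+2 = 3*(n+1)+4 by omega, show 3*n+5+1 = 3*(n+1)+3 by omega,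
          show (3*n+5) = 3*(n+1)+2 by omega] at hd
        have hb5 : (b (3*(n+1)+2) : ℝ) = 1 := by
          rw [hb, kmtB_two3]; norm_num
        rw [hd, hb5, e6, e5, KW_eq c (n+1)]
        field_simp
        ring
      exact ⟨e5, e6, e7⟩
  -- sign and size facts
  have hpow1 : ∀ n : ℕ, (-1:ℝ)^(3*n+1) = (-1)^n * (-1) := by
    intro n; rw [pow_add, pow_mul]; norm_num
  have hpow2 : ∀ n : ℕ, (-1:ℝ)^(3*n+2) = (-1)^n := by
    intro n; rw [pow_add, pow_mul]; norm_num
  have hpow3 : ∀ n : ℕ, (-1:ℝ)^(3*n+3) = (-1)^n * (-1) := by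
    intro n; rw [pow_add, pow_mul]; norm_num
  have hpow4 : ∀ n : ℕ, (-1:ℝ)^(3*n+4) = (-1)^n := by
    intro n; rw [pow_add, pow_mul]; norm_num
  have hden : ∀ n : ℕ, (0:ℝ) < c^(n+1) * (n.factorial : ℝ) := by
    intro n; positivity
  have keyPos : ∀ k, 0 < (-1:ℝ)^k * D (k+1) := by
    intro k
    rcases k with _ | k
    · simpa [D1] using one_pos
    obtain ⟨n, hn⟩ : ∃ n, k+1 = 3*n+1 ∨ k+1 = 3*n+2 ∨ k+1 = 3*n+3 := ⟨k/3, by omega⟩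
    rcases hn with hn | hn | hn <;> rw [hn]
    · rw [show 3*n+1+1 = 3*n+2 by omega, (cf n).1, hpow1]
      rw [show (-1:ℝ)^n * (-1) * (-((s:ℝ) * KU c n)/(c^(n+1) * n.factorial))
        = ((s:ℝ) * ((-1:ℝ)^n * KU c n))/(c^(n+1) * n.factorial) by ring]
      exact div_pos (mul_pos hspos (posU c n)) (hden n)
    · rw [show 3*n+2+1 = 3*n+3 by omega, (cf n).2.1, hpow2]
      rw [show (-1:ℝ)^n * ((KW c n + ((s:ℝ)-1) * KU c n)/(c^(n+1) * n.factorial))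
        = (((-1:ℝ)^n * KW c n) + ((s:ℝ)-1) * ((-1:ℝ)^n * KU c n))/(c^(n+1) * n.factorial) by ring]
      refine div_pos ?_ (hden n)
      have h1 := posW c n
      have h2 := posU c n
      nlinarith
    · rw [show 3*n+3+1 = 3*n+4 by omega, (cf n).2.2, hpow3]
      rw [show (-1:ℝ)^n * (-1) * (KV c n/(c^(n+1) * n.factorial))
        = ((-1:ℝ)^(n+1) * KV c n)/(c^(n+1) * n.factorial) by rw [pow_succ]; ring]
      exact div_pos (posV c n) (hden n)
  have keyLt : ∀ k, (-1:ℝ)^(k+1) * D (k+2) < (-1:ℝ)^k * D (k+1) := by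
    intro k
    rcases k with _ | k
    · have hb := exp_bound hs1 hcs
      rw [pow_one, pow_zero, D2, D1, hα]
      nlinarith
    obtain ⟨n, hn⟩ : ∃ n, k+1 = 3*n+1 ∨ k+1 = 3*n+2 ∨ k+1 = 3*n+3 := ⟨k/3, by omega⟩
    rcases hn with hn | hn | hn <;> rw [hn]
    · -- |D(3n+3)| < |D(3n+2)|
      rw [show 3*n+1+1 = 3*n+2 by omega, show 3*n+1+2 = 3*n+3 by omega,
        (cf n).1, (cf n).2.1, hpow1, hpow2]
      rw [show (-1:ℝ)^n * ((KW c n + ((s:ℝ)-1) * KU c n)/(c^(n+1) * n.factorial))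
        = (((-1:ℝ)^n * KW c n) + ((s:ℝ)-1) * ((-1:ℝ)^n * KU c n))/(c^(n+1) * n.factorial) by ring,
        show (-1:ℝ)^n * (-1) * (-((s:ℝ) * KU c n)/(c^(n+1) * n.factorial))
        = ((s:ℝ) * ((-1:ℝ)^n * KU c n))/(c^(n+1) * n.factorial) by ring]
      rw [div_lt_div_iff_of_pos_right (hden n)]
      have e1 : (-1:ℝ)^n * KW c n = -((-1:ℝ)^(n+1) * KV c n) + (-1)^n * KU c n := by
        rw [KW_eq]; ring
      have h1 := posV c n
      linarith
    · -- |D(3n+4)| < |D(3n+3)|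
      rw [show 3*n+2+1 = 3*n+3 by omega, show 3*n+2+2 = 3*n+4 by omega,
        (cf n).2.1, (cf n).2.2, hpow2, hpow3]
      rw [show (-1:ℝ)^n * (-1) * (KV c n/(c^(n+1) * n.factorial))
        = ((-1:ℝ)^(n+1) * KV c n)/(c^(n+1) * n.factorial) by rw [pow_succ]; ring,
        show (-1:ℝ)^n * ((KW c n + ((s:ℝ)-1) * KU c n)/(c^(n+1) * n.factorial))
        = (((-1:ℝ)^n * KW c n) + ((s:ℝ)-1) * ((-1:ℝ)^n * KU c n))/(c^(n+1) * n.factorial) by ring]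
      rw [div_lt_div_iff_of_pos_right (hden n)]
      have e1 : (-1:ℝ)^n * KW c n = -((-1:ℝ)^(n+1) * KV c n) + (-1)^n * KU c n := by
        rw [KW_eq]; ring
      have e2 : ((n:ℝ)+1) * (((-1:ℝ)^n * KU c n) - 2*((-1:ℝ)^(n+1) * KV c n))
          = (1/c) * ((-1:ℝ)^(n+1) * KU c (n+1)) := by
        linear_combination (-1:ℝ)^n * R1 c n - ((n:ℝ)+1) * (-1:ℝ)^n * KW_eq c n
      have h1 := posU c n
      have h2 := posU c (n+1)
      have h3 : 0 < ((-1:ℝ)^n * KU c n) - 2*((-1:ℝ)^(n+1) * KV c n) := by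
        have hnn : (0:ℝ) < (n:ℝ)+1 := by positivity
        nlinarith [mul_pos (show (0:ℝ) < 1/c by positivity) h2]
      have h4 : 0 ≤ ((s:ℝ)-1) * ((-1:ℝ)^n * KU c n) := by
        apply mul_nonneg (by linarith) (le_of_lt h1)
      linarith
    · -- |D(3(n+1)+2)| < |D(3n+4)|
      rw [show 3*n+3+1 = 3*n+4 by omega, show 3*n+3+2 = 3*(n+1)+2 by omega,
        (cf n).2.2, (cf (n+1)).1, hpow3, hpow4]
      rw [show (-1:ℝ)^n * (-((s:ℝ) * KU c (n+1))/(c^(n+1+1) * Nat.factorial (n+1)))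
        = ((s:ℝ) * ((-1:ℝ)^(n+1) * KU c (n+1)))/(c^(n+1+1) * Nat.factorial (n+1)) by
          rw [pow_succ]; ring,
        show (-1:ℝ)^n * (-1) * (KV c n/(c^(n+1) * n.factorial))
        = ((-1:ℝ)^(n+1) * KV c n)/(c^(n+1) * n.factorial) by rw [pow_succ]; ring]
      rw [div_lt_div_iff₀ (hden (n+1)) (hden n)]
      have hA := posU c (n+1)
      have hB := posV c n
      have hAB := posVU c n
      have key : (s:ℝ) * ((-1:ℝ)^(n+1) * KU c (n+1)) < (c*((n:ℝ)+1)) * ((-1:ℝ)^(n+1) * KV c n) := by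
        have k1 : (s:ℝ) * ((-1:ℝ)^(n+1) * KU c (n+1)) < (s:ℝ) * ((-1:ℝ)^(n+1) * KV c n) :=
          mul_lt_mul_of_pos_left hAB hspos
        have k2 : (s:ℝ) * ((-1:ℝ)^(n+1) * KV c n) ≤ (c*((n:ℝ)+1)) * ((-1:ℝ)^(n+1) * KV c n) := by
          apply mul_le_mul_of_nonneg_right ?_ (le_of_lt hB)
          nlinarith
        linarith
      have hfac : ((n+1).factorial : ℝ) = ((n:ℝ)+1) * (n.factorial : ℝ) := by
        rw [Nat.factorial_succ]; push_cast; ring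
      rw [hfac]
      have hrw : ((-1:ℝ)^(n+1) * KV c n)*(c^(n+1+1)*(((n:ℝ)+1)*(n.factorial:ℝ)))
          = (c*((n:ℝ)+1) * ((-1:ℝ)^(n+1) * KV c n))*(c^(n+1)*(n.factorial:ℝ)) := by
        ring
      rw [hrw]
      exact mul_lt_mul_of_pos_right key (hden n)
  -- complete quotients
  have Dne : ∀ k, D (k+1) ≠ 0 := by
    intro k h
    have := keyPos k
    rw [h, mul_zero] at this
    exact lt_irrefl _ this
  set ζ : ℕ → ℝ := fun k => -D k / D (k+1) with hζ
  have hζ0 : ζ 0 = α := by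
    simp [hζ, D0, D1]
  have hfloorfr : ∀ k, ζ k - (b k : ℝ) = ((-1:ℝ)^(k+1) * D (k+2))/((-1:ℝ)^k * D (k+1)) := by
    intro k
    have hne : ((-1:ℝ)^k) ≠ 0 := pow_ne_zero _ (by norm_num)
    rw [pow_succ]
    rw [show (-1:ℝ)^k * -1 * D (k+2) = (-1:ℝ)^k * (-(D (k+2))) by ring,
      mul_div_mul_left _ _ hne]
    rw [hζ, Drec k]
    field_simp [Dne k]
    ring
  have hfr01 : ∀ k, 0 < ζ k - (b k : ℝ) ∧ ζ k - (b k : ℝ) < 1 := by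
    intro k
    rw [hfloorfr k]
    constructor
    · exact div_pos (keyPos (k+1)) (keyPos k)
    · rw [div_lt_one (keyPos k)]
      exact keyLt k
  have hfloor : ∀ k, ⌊ζ k⌋ = b k := by
    intro k
    rw [Int.floor_eq_iff]
    have := hfr01 k
    constructor
    · linarith [this.1]
    · push_cast
      linarith [this.2]
  have hfract : ∀ k, Int.fract (ζ k) = -D (k+2) / D (k+1) := by
    intro k
    rw [Int.fract, hfloor k]
    have h1 := hfloorfr k
    have hne : ((-1:ℝ)^k) ≠ 0 := pow_ne_zero _ (by norm_num)
    rw [h1, pow_succ]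
    rw [show (-1:ℝ)^k * -1 * D (k+2) = (-1:ℝ)^k * (-(D (k+2))) by ring,
      mul_div_mul_left _ _ hne]
  have hfrne : ∀ k, Int.fract (ζ k) ≠ 0 := by
    intro k
    have h01 := hfr01 k
    have : Int.fract (ζ k) = ζ k - (b k : ℝ) := by
      rw [Int.fract, hfloor k]
    rw [this]
    linarith [h01.1]
  have hnext : ∀ k, (Int.fract (ζ k))⁻¹ = ζ (k+1) := by
    intro k
    rw [hfract k]
    simp only [hζ, neg_div]
    rw [inv_neg, inv_div]
  -- the CF of α
  have sget : ∀ k, (GenContFract.of α).s.get? k = some ⟨1, ((b (k+1) : ℤ) : ℝ)⟩ := by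
    intro k
    have := kmt_bridge ζ hfrne hnext k 0
    rw [hζ0] at this
    rw [this, hfloor]
    norm_num
  have hh : (GenContFract.of α).h = ((s:ℕ):ℝ) := by
    rw [GenContFract.of_h_eq_floor, ← hζ0, hfloor 0, hb, kmtB_zero]
    norm_num
  -- identify nums and dens
  have PQ : ∀ k, ((GenContFract.of α).nums k = P (k+2) ∧ (GenContFract.of α).dens k = Q (k+2))
      ∧ ((GenContFract.of α).nums (k+1) = P (k+3) ∧ (GenContFract.of α).dens (k+1) = Q (k+3)) := by
    intro k
    induction k with
    | zero =>
      refine ⟨⟨?_, ?_⟩, ?_, ?_⟩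
      · rw [GenContFract.zeroth_num_eq_h, hh]
        simp [hP, kmtP, hb, kmtB_zero]
      · rw [GenContFract.zeroth_den_eq_one]
        simp [hQ, kmtP, hb, kmtB_zero]
      · rw [GenContFract.first_num_eq (sget 0), hh]
        simp [hP, kmtP, hb, kmtB_zero]
      · rw [GenContFract.first_den_eq (sget 0)]
        simp [hQ, kmtP, hb, kmtB_zero]
    | succ k ih =>
      refine ⟨ih.2, ?_, ?_⟩
      · rw [GenContFract.nums_recurrence (sget (k+1)) ih.1.1 ih.2.1]
        simp only [hP, kmtP]
        ring
      · rw [GenContFract.dens_recurrence (sget (k+1)) ih.1.2 ih.2.2]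
        simp only [hQ, kmtP]
        ring
  have PQD : ∀ k, (GenContFract.of α).nums k - α * (GenContFract.of α).dens k = D (k+2) := by
    intro k
    rw [(PQ k).1.1, (PQ k).1.2, hD]
  intro n
  refine ⟨?_, ?_, ?_⟩
  · rw [PQD]
    exact (cf n).1
  · rw [PQD, show 3*n+1+2 = 3*n+3 by omega]
    exact (cf n).2.1
  · rw [PQD, show 3*n+2+2 = 3*n+4 by omega]
    exact (cf n).2.2


theorem komatsu_integral_formulas (ℓ s : ℕ) (hℓ : 2 ≤ ℓ) (hs : 1 ≤ s) :
    let α : ℝ := (s : ℝ) * Real.exp (1 / ((ℓ : ℝ) * (s : ℝ)))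
    ∀ n : ℕ,
      (cfNum α (3 * n) - α * cfDen α (3 * n) =
        -(1 / ((ℓ : ℝ) * (s : ℝ)) ^ (n + 1)) *
          ∫ x in (0:ℝ)..1,
            (x ^ n * (x - 1) ^ n / (n.factorial : ℝ)) *
              ((s : ℝ) * Real.exp (x / ((ℓ : ℝ) * (s : ℝ)))) ) ∧
      (cfNum α (3 * n + 1) - α * cfDen α (3 * n + 1) =
        (1 / ((s : ℝ) * ((ℓ : ℝ) * (s : ℝ)) ^ (n + 1))) *
          ∫ x in (0:ℝ)..1,
            ((x + (s : ℝ) - 1) * x ^ n * (x - 1) ^ n / (n.factorial : ℝ)) *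
              ((s : ℝ) * Real.exp (x / ((ℓ : ℝ) * (s : ℝ)))) ) ∧
      (cfNum α (3 * n + 2) - α * cfDen α (3 * n + 2) =
        (1 / ((s : ℝ) * ((ℓ : ℝ) * (s : ℝ)) ^ (n + 1))) *
          ∫ x in (0:ℝ)..1,
            (x ^ n * (x - 1) ^ (n + 1) / (n.factorial : ℝ)) *
              ((s : ℝ) * Real.exp (x / ((ℓ : ℝ) * (s : ℝ)))) ) := by
  intro α n
  have hα : α = (s : ℝ) * Real.exp (1 / ((ℓ : ℝ) * (s : ℝ))) := rfl
  have hmain := kmt_main ℓ s hℓ hs ((ℓ:ℝ)*(s:ℝ)) rfl α hα n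
  have hs0 : (s:ℝ) ≠ 0 := by
    have : (0:ℝ) < s := by exact_mod_cast hs
    have : (0:ℝ) < ℓ := by exact_mod_cast (by omega : 0 < ℓ)
    positivity
  have hc0 : ((ℓ:ℝ)*(s:ℝ)) ≠ 0 := by
    have : (0:ℝ) < s := by exact_mod_cast hs
    have : (0:ℝ) < ℓ := by exact_mod_cast (by omega : 0 < ℓ)
    positivity
  have hf0 : ((n.factorial : ℕ) : ℝ) ≠ 0 := by positivity
  refine ⟨?_, ?_, ?_⟩
  · have hint : (∫ x in (0:ℝ)..1, (x ^ n * (x - 1) ^ n / (n.factorial : ℝ)) *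
          ((s : ℝ) * Real.exp (x / ((ℓ : ℝ) * (s : ℝ)))))
        = ((s:ℝ)/(n.factorial : ℝ)) * KU ((ℓ:ℝ)*(s:ℝ)) n := by
      apply kmt_scale ((ℓ:ℝ)*(s:ℝ)) _ (fun x => x^n * (x-1)^n) _ (by continuity)
      intro x; ring
    show (GenContFract.of α).nums (3*n) - α * (GenContFract.of α).dens (3*n) = _
    rw [hmain.1, hint]
    field_simp
    try ring
  · have hint : (∫ x in (0:ℝ)..1, ((x + (s : ℝ) - 1) * x ^ n * (x - 1) ^ n / (n.factorial : ℝ)) *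
          ((s : ℝ) * Real.exp (x / ((ℓ : ℝ) * (s : ℝ)))))
        = ((s:ℝ)/(n.factorial : ℝ)) * KW ((ℓ:ℝ)*(s:ℝ)) n
          + ((s:ℝ)*((s:ℝ)-1)/(n.factorial : ℝ)) * KU ((ℓ:ℝ)*(s:ℝ)) n := by
      apply kmt_comb ((ℓ:ℝ)*(s:ℝ)) _ _ (fun x => x^(n+1) * (x-1)^n) (fun x => x^n * (x-1)^n) _
        (by continuity) (by continuity)
      intro x; ring
    show (GenContFract.of α).nums (3*n+1) - α * (GenContFract.of α).dens (3*n+1) = _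
    rw [hmain.2.1, hint]
    field_simp
    try ring
  · have hint : (∫ x in (0:ℝ)..1, (x ^ n * (x - 1) ^ (n + 1) / (n.factorial : ℝ)) *
          ((s : ℝ) * Real.exp (x / ((ℓ : ℝ) * (s : ℝ)))))
        = ((s:ℝ)/(n.factorial : ℝ)) * KV ((ℓ:ℝ)*(s:ℝ)) n := by
      apply kmt_scale ((ℓ:ℝ)*(s:ℝ)) _ (fun x => x^n * (x-1)^(n+1)) _ (by continuity)
      intro x; ring
    show (GenContFract.of α).nums (3*n+2) - α * (GenContFract.of α).dens (3*n+2) = _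
    rw [hmain.2.2, hint]
    field_simp
    try ring
end

section
/- Let s ≥ 1 be an integer. The regular continued fraction expansion of s·e^(1/s) is [a₀; a₁, a₂, ...] where a₀ = s + 1 and, for every integer k ≥ 0, a_{3k+1} = 2s − 1, a_{3k+2} = 2(k+1), and a_{3k+3} = 1. -/
open Real MeasureTheory Set

namespace SExpCF

noncomputable def J (S : ℝ) (m n : ℕ) : ℝ :=
  ∫ t in (0:ℝ)..1, t ^ m * (1 - t) ^ n * Real.exp (t / S)

lemma contJ (S : ℝ) (m n : ℕ) :
    Continuous fun t : ℝ => t ^ m * (1 - t) ^ n * Real.exp (t / S) := by fun_prop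

lemma Jpos (S : ℝ) (m n : ℕ) : 0 < J S m n := by
  apply intervalIntegral.intervalIntegral_pos_of_pos_on
    ((contJ S m n).intervalIntegrable 0 1)
  · intro x hx
    have h1 : (0:ℝ) < x := hx.1
    have h2 : (0:ℝ) < 1 - x := by linarith [hx.2]
    positivity
  · norm_num

lemma integral_lt {f g : ℝ → ℝ} (hf : Continuous f) (hg : Continuous g)
    (h : ∀ t ∈ Set.Ioo (0:ℝ) 1, f t < g t) :
    (∫ t in (0:ℝ)..1, f t) < ∫ t in (0:ℝ)..1, g t := by
  have hpos : 0 < ∫ t in (0:ℝ)..1, (g t - f t) :=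
    intervalIntegral.intervalIntegral_pos_of_pos_on
      ((hg.sub hf).intervalIntegrable 0 1)
      (fun x hx => sub_pos.2 (h x hx)) one_pos
  rw [intervalIntegral.integral_sub (hg.intervalIntegrable 0 1)
    (hf.intervalIntegrable 0 1)] at hpos
  linarith

lemma ibp (S : ℝ) (hS : S ≠ 0) (P P' : ℝ → ℝ) (hP : ∀ t, HasDerivAt P (P' t) t)
    (hC : Continuous fun t => (P' t + P t / S) * Real.exp (t / S)) :
    (∫ t in (0:ℝ)..1, (P' t + P t / S) * Real.exp (t / S))
      = P 1 * Real.exp (1 / S) - P 0 := by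
  have h : ∀ t ∈ Set.uIcc (0:ℝ) 1, HasDerivAt (fun t => P t * Real.exp (t / S))
      ((P' t + P t / S) * Real.exp (t / S)) t := by
    intro t _
    have h1 : HasDerivAt (fun t : ℝ => t / S) (1 / S) t := (hasDerivAt_id t).div_const S
    have h2 : HasDerivAt (fun t : ℝ => Real.exp (t / S)) (Real.exp (t / S) * (1 / S)) t :=
      (Real.hasDerivAt_exp _).comp t h1
    have h3 := (hP t).mul h2
    refine h3.congr_deriv ?_
    ring
  have key := intervalIntegral.integral_eq_sub_of_hasDerivAt h (hC.intervalIntegrable 0 1)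
  simpa using key

lemma hasDerivAt_poly (c : ℝ) (a b : ℕ) (t : ℝ) :
    HasDerivAt (fun t : ℝ => c * (t ^ (a + 1) * (1 - t) ^ (b + 1)))
      (c * (((a : ℝ) + 1) * t ^ a * (1 - t) ^ (b + 1)
        - ((b : ℝ) + 1) * t ^ (a + 1) * (1 - t) ^ b)) t := by
  have h1 : HasDerivAt (fun t : ℝ => t ^ (a + 1)) (((a : ℝ) + 1) * t ^ a) t := by
    have := hasDerivAt_pow (a + 1) t
    simpa [Nat.add_sub_cancel] using this
  have h0 : HasDerivAt (fun t : ℝ => 1 - t) (-1) t := (hasDerivAt_id t).const_sub 1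
  have h2 : HasDerivAt (fun t : ℝ => (1 - t) ^ (b + 1))
      (((b : ℝ) + 1) * (1 - t) ^ b * (-1)) t := by
    have := h0.pow (b + 1)
    rw [show (fun t : ℝ => (1 - t) ^ (b + 1)) = (fun t : ℝ => 1 - t) ^ (b + 1) from rfl]
    simpa [Nat.add_sub_cancel] using this
  have h3 := (h1.mul h2).const_mul c
  refine h3.congr_deriv ?_
  ring

lemma Jcomb (S c1 c2 c3 : ℝ) (m1 n1 m2 n2 m3 n3 : ℕ) :
    (∫ t in (0:ℝ)..1, (c1 * (t ^ m1 * (1 - t) ^ n1) + c2 * (t ^ m2 * (1 - t) ^ n2)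
        + c3 * (t ^ m3 * (1 - t) ^ n3)) * Real.exp (t / S))
      = c1 * J S m1 n1 + c2 * J S m2 n2 + c3 * J S m3 n3 := by
  have i1 : IntervalIntegrable (fun t : ℝ => c1 * (t ^ m1 * (1 - t) ^ n1 * Real.exp (t / S)))
      volume 0 1 := (Continuous.intervalIntegrable (by fun_prop) 0 1)
  have i2 : IntervalIntegrable (fun t : ℝ => c2 * (t ^ m2 * (1 - t) ^ n2 * Real.exp (t / S)))
      volume 0 1 := (Continuous.intervalIntegrable (by fun_prop) 0 1)
  have i3 : IntervalIntegrable (fun t : ℝ => c3 * (t ^ m3 * (1 - t) ^ n3 * Real.exp (t / S)))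
      volume 0 1 := (Continuous.intervalIntegrable (by fun_prop) 0 1)
  have e1 : c1 * J S m1 n1 = ∫ t in (0:ℝ)..1, c1 * (t ^ m1 * (1 - t) ^ n1 * Real.exp (t / S)) :=
    (intervalIntegral.integral_const_mul _ _).symm
  have e2 : c2 * J S m2 n2 = ∫ t in (0:ℝ)..1, c2 * (t ^ m2 * (1 - t) ^ n2 * Real.exp (t / S)) :=
    (intervalIntegral.integral_const_mul _ _).symm
  have e3 : c3 * J S m3 n3 = ∫ t in (0:ℝ)..1, c3 * (t ^ m3 * (1 - t) ^ n3 * Real.exp (t / S)) :=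
    (intervalIntegral.integral_const_mul _ _).symm
  rw [e1, e2, e3, ← intervalIntegral.integral_add i1 i2,
    ← intervalIntegral.integral_add (i1.add i2) i3]
  apply intervalIntegral.integral_congr
  intro t _
  ring

lemma Jsplit (S : ℝ) (m n : ℕ) : J S m (n + 1) = J S m n - J S (m + 1) n := by
  rw [J, J, J, ← intervalIntegral.integral_sub ((contJ S m n).intervalIntegrable 0 1)
    ((contJ S (m+1) n).intervalIntegrable 0 1)]
  apply intervalIntegral.integral_congr
  intro t _
  ring


lemma I1 (S : ℝ) (hS : S ≠ 0) (k : ℕ) :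
    J S (k+1) (k+1) = S * ((k:ℝ)+1) * (J S (k+1) k - J S k (k+1)) := by
  have key := ibp S hS (fun t => -S * (t ^ (k+1) * (1 - t) ^ (k+1)))
      (fun t => -S * (((k:ℝ)+1) * t ^ k * (1 - t) ^ (k+1) - ((k:ℝ)+1) * t ^ (k+1) * (1 - t) ^ k))
      (fun t => hasDerivAt_poly (-S) k k t) (by fun_prop)
  have hcong : (∫ t in (0:ℝ)..1,
      ((-S * (((k:ℝ)+1) * t ^ k * (1 - t) ^ (k+1) - ((k:ℝ)+1) * t ^ (k+1) * (1 - t) ^ k))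
        + (-S * (t ^ (k+1) * (1 - t) ^ (k+1))) / S) * Real.exp (t / S))
      = (-(S*((k:ℝ)+1))) * J S k (k+1) + (S*((k:ℝ)+1)) * J S (k+1) k
        + (-1) * J S (k+1) (k+1) := by
    rw [← Jcomb S (-(S*((k:ℝ)+1))) (S*((k:ℝ)+1)) (-1) k (k+1) (k+1) k (k+1) (k+1)]
    apply intervalIntegral.integral_congr
    intro t _
    dsimp only
    field_simp
    ring
  rw [hcong] at key
  norm_num at key
  linear_combination -key

lemma I2 (S : ℝ) (hS : S ≠ 0) (k : ℕ) :
    J S (k+1) (k+2) = S * ((k:ℝ)+2) * J S (k+1) (k+1) - S * ((k:ℝ)+1) * J S k (k+2) := by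
  have key := ibp S hS (fun t => -S * (t ^ (k+1) * (1 - t) ^ (k+2)))
      (fun t => -S * (((k:ℝ)+1) * t ^ k * (1 - t) ^ (k+2) - ((k:ℝ)+2) * t ^ (k+1) * (1 - t) ^ (k+1)))
      (fun t => by
        have h := hasDerivAt_poly (-S) k (k+1) t
        have e : -S * (((k : ℝ) + 1) * t ^ k * (1 - t) ^ (k + 1 + 1)
            - (((k + 1 : ℕ) : ℝ) + 1) * t ^ (k + 1) * (1 - t) ^ (k + 1))
            = -S * (((k:ℝ)+1) * t ^ k * (1 - t) ^ (k+2)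
              - ((k:ℝ)+2) * t ^ (k+1) * (1 - t) ^ (k+1)) := by
          push_cast
          ring
        rw [e] at h
        exact h) (by fun_prop)
  have hcong : (∫ t in (0:ℝ)..1,
      ((-S * (((k:ℝ)+1) * t ^ k * (1 - t) ^ (k+2) - ((k:ℝ)+2) * t ^ (k+1) * (1 - t) ^ (k+1)))
        + (-S * (t ^ (k+1) * (1 - t) ^ (k+2))) / S) * Real.exp (t / S))
      = (-(S*((k:ℝ)+1))) * J S k (k+2) + (S*((k:ℝ)+2)) * J S (k+1) (k+1)
        + (-1) * J S (k+1) (k+2) := by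
    rw [← Jcomb S (-(S*((k:ℝ)+1))) (S*((k:ℝ)+2)) (-1) k (k+2) (k+1) (k+1) (k+1) (k+2)]
    apply intervalIntegral.integral_congr
    intro t _
    dsimp only
    field_simp
    ring
  rw [hcong] at key
  norm_num at key
  linear_combination -key

lemma J00 (S : ℝ) (hS : S ≠ 0) : J S 0 0 = S * Real.exp (1 / S) - S := by
  have key := ibp S hS (fun _ => S) (fun _ => 0) (fun t => hasDerivAt_const t S) (by fun_prop)
  rw [J, ← key]
  apply intervalIntegral.integral_congr
  intro t _
  dsimp only
  rw [pow_zero, pow_zero]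
  field_simp
  ring

lemma J10 (S : ℝ) (hS : S ≠ 0) : J S 1 0 = (S - S^2) * Real.exp (1 / S) + S^2 := by
  have hP : ∀ t : ℝ, HasDerivAt (fun t : ℝ => S * t - S^2) S t := by
    intro t
    have := ((hasDerivAt_id t).const_mul S).sub_const (S^2)
    simpa using this
  have key := ibp S hS (fun t => S * t - S^2) (fun _ => S) hP (by fun_prop)
  norm_num at key
  rw [J]
  have : (∫ t in (0:ℝ)..1, t ^ 1 * (1 - t) ^ 0 * Real.exp (t / S))
      = ∫ t in (0:ℝ)..1, (S + (S * t - S^2) / S) * Real.exp (t / S) := by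
    apply intervalIntegral.integral_congr
    intro t _
    dsimp only
    rw [pow_one, pow_zero]
    field_simp
    ring
  rw [this, key, one_div]

lemma Ilt1 (S : ℝ) (k : ℕ) : J S (k+1) (k+1) < ((k:ℝ)+1) * J S k (k+1) := by
  rw [J, J, ← intervalIntegral.integral_const_mul]
  apply integral_lt (contJ S (k+1) (k+1)) (by fun_prop)
  intro t ht
  have htk : (0:ℝ) < t ^ k := pow_pos ht.1 k
  have h1 : t ^ (k+1) < ((k:ℝ)+1) * t ^ k := by
    have e : t ^ (k+1) = t * t ^ k := by ring
    rw [e]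
    have h5 : t * t ^ k < 1 * t ^ k := mul_lt_mul_of_pos_right ht.2 htk
    have hk : (0:ℝ) ≤ (k:ℝ) := Nat.cast_nonneg k
    nlinarith
  have hpos : (0:ℝ) < (1 - t) ^ (k+1) * Real.exp (t / S) := by
    have h2 : (0:ℝ) < 1 - t := by linarith [ht.2]
    positivity
  calc t ^ (k+1) * (1 - t) ^ (k+1) * Real.exp (t / S)
      = t ^ (k+1) * ((1 - t) ^ (k+1) * Real.exp (t / S)) := by ring
    _ < (((k:ℝ)+1) * t ^ k) * ((1 - t) ^ (k+1) * Real.exp (t / S)) :=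
        mul_lt_mul_of_pos_right h1 hpos
    _ = ((k:ℝ)+1) * (t ^ k * (1 - t) ^ (k+1) * Real.exp (t / S)) := by ring

lemma Ilt2 (S : ℝ) (hS : 1 ≤ S) (k : ℕ) : J S (k+1) (k+2) < S * J S (k+1) (k+1) := by
  rw [J, J, ← intervalIntegral.integral_const_mul]
  apply integral_lt (contJ S (k+1) (k+2)) (by fun_prop)
  intro t ht
  have h2 : (0:ℝ) < 1 - t := by linarith [ht.2]
  have h1 : (1 - t) ^ (k+2) < S * (1 - t) ^ (k+1) := by
    have e : (1 - t) ^ (k+2) = (1 - t) * (1 - t) ^ (k+1) := by ring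
    rw [e]
    have hp : (0:ℝ) < (1 - t) ^ (k+1) := pow_pos h2 (k+1)
    exact mul_lt_mul_of_pos_right (by have := ht.1; linarith) hp
  have hpos : (0:ℝ) < t ^ (k+1) * Real.exp (t / S) := by
    have := ht.1
    positivity
  calc t ^ (k+1) * (1 - t) ^ (k+2) * Real.exp (t / S)
      = (1 - t) ^ (k+2) * (t ^ (k+1) * Real.exp (t / S)) := by ring
    _ < (S * (1 - t) ^ (k+1)) * (t ^ (k+1) * Real.exp (t / S)) :=
        mul_lt_mul_of_pos_right h1 hpos
    _ = S * (t ^ (k+1) * (1 - t) ^ (k+1) * Real.exp (t / S)) := by ring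

lemma Ilt3 (S : ℝ) (hS : 1 ≤ S) : J S 0 1 < S := by
  have h : J S 0 1 < ∫ _ in (0:ℝ)..1, S := by
    rw [J]
    apply integral_lt (contJ S 0 1) continuous_const
    intro t ht
    have h2 : (0:ℝ) < 1 - t := by linarith [ht.2]
    have hle : Real.exp (t / S) ≤ Real.exp t :=
      Real.exp_le_exp.2 (div_le_self ht.1.le hS)
    have h3 : (1 - t) * Real.exp t < 1 := by
      have hne : (-t) ≠ 0 := by
        have := ht.1; intro h; rw [neg_eq_zero] at h; linarith
      have h6 := Real.add_one_lt_exp hne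
      have h4 : 1 - t < Real.exp (-t) := by linarith
      have h5 : (1 - t) * Real.exp t < Real.exp (-t) * Real.exp t :=
        mul_lt_mul_of_pos_right h4 (Real.exp_pos t)
      rwa [← Real.exp_add, neg_add_cancel, Real.exp_zero] at h5
    calc t ^ 0 * (1 - t) ^ 1 * Real.exp (t / S) = (1 - t) * Real.exp (t / S) := by ring
      _ ≤ (1 - t) * Real.exp t := mul_le_mul_of_nonneg_left hle h2.le
      _ < 1 := h3
      _ ≤ S := hS
  simpa using h


lemma of_eq (b : ℤ) (x f : ℝ) (hx : x = b + f) (h0 : 0 < f) (h1 : f < 1) :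
    GenContFract.IntFractPair.of x = ⟨b, f⟩ := by
  have hfl : ⌊x⌋ = b := by
    rw [Int.floor_eq_iff]
    constructor
    · rw [hx]; linarith
    · rw [hx]; push_cast; linarith
  have hfr : Int.fract x = f := by
    rw [Int.fract, hfl, hx]; ring
  unfold GenContFract.IntFractPair.of
  rw [hfl, hfr]

lemma stream_spec (s : ℕ) (hs : 1 ≤ s) (k : ℕ) :
    (GenContFract.IntFractPair.stream ((s:ℝ) * Real.exp (1 / (s:ℝ))) (3*k+1)
      = some ⟨2*(s:ℤ)-1,
          J (s:ℝ) (k+1) (k+1) / (((k:ℝ)+1) * J (s:ℝ) k (k+1))⟩) ∧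
    (GenContFract.IntFractPair.stream ((s:ℝ) * Real.exp (1 / (s:ℝ))) (3*k+2)
      = some ⟨2*((k:ℤ)+1),
          ((s:ℝ) * J (s:ℝ) (k+1) (k+1) - J (s:ℝ) (k+1) (k+2))
            / ((s:ℝ) * J (s:ℝ) (k+1) (k+1))⟩) ∧
    (GenContFract.IntFractPair.stream ((s:ℝ) * Real.exp (1 / (s:ℝ))) (3*k+3)
      = some ⟨1,
          J (s:ℝ) (k+1) (k+2)
            / ((s:ℝ) * J (s:ℝ) (k+1) (k+1) - J (s:ℝ) (k+1) (k+2))⟩) := by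
  set S : ℝ := (s : ℝ) with hSdef
  have hS1 : (1:ℝ) ≤ S := by rw [hSdef]; exact_mod_cast hs
  have hS0 : (0:ℝ) < S := by linarith
  have hSne : S ≠ 0 := ne_of_gt hS0
  set α : ℝ := S * Real.exp (1 / S) with hαdef
  -- basic facts
  have hu : ∀ m, 0 < J S m (m+1) := fun m => Jpos S m (m+1)
  have hw : ∀ m, 0 < J S (m+1) (m+1) := fun m => Jpos S (m+1) (m+1)
  have hc : ∀ m, 0 < J S (m+1) (m+2) := fun m => Jpos S (m+1) (m+2)
  have hwu : ∀ m : ℕ, J S (m+1) (m+1) < ((m:ℝ)+1) * J S m (m+1) := fun m => Ilt1 S m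
  have huw : ∀ m : ℕ, J S (m+1) (m+2) < S * J S (m+1) (m+1) := fun m => Ilt2 S hS1 m
  have hU : ∀ m : ℕ, J S (m+1) (m+2)
      = S*(2*(m:ℝ)+3) * J S (m+1) (m+1) - S*((m:ℝ)+1) * J S m (m+1) := by
    intro m
    have h1 : J S (m+1) (m+2)
        = S * ((m:ℝ)+2) * J S (m+1) (m+1) - S*((m:ℝ)+1) * J S m (m+2) := I2 S hSne m
    have h2 : J S m (m+2) = J S m (m+1) - J S (m+1) (m+1) := Jsplit S m (m+1)
    rw [h1, h2]; ring
  have hW : ∀ m : ℕ, J S (m+2) (m+2)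
      = S*((m:ℝ)+2) * (J S (m+1) (m+1) - 2 * J S (m+1) (m+2)) := by
    intro m
    have h1 : J S (m+2) (m+2)
        = S * (((m+1:ℕ):ℝ)+1) * (J S (m+2) (m+1) - J S (m+1) (m+2)) := I1 S hSne (m+1)
    have h2 : J S (m+1) (m+2) = J S (m+1) (m+1) - J S (m+2) (m+1) := Jsplit S (m+1) (m+1)
    rw [h1]
    push_cast
    have h3 : J S (m+2) (m+1) = J S (m+1) (m+1) - J S (m+1) (m+2) := by rw [h2]; ring
    rw [h3]; ring
  have h2c : ∀ m : ℕ, 2 * J S (m+1) (m+2) < J S (m+1) (m+1) := by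
    intro m
    have h2 : (0:ℝ) < J S (m+2) (m+2) := Jpos S (m+2) (m+2)
    have h3 : 0 < S * ((m:ℝ)+2) * (J S (m+1) (m+1) - 2 * J S (m+1) (m+2)) := by
      rw [← hW m]; exact h2
    have hS2 : (0:ℝ) < S * ((m:ℝ)+2) := by positivity
    rcases mul_pos_iff.mp h3 with ⟨_, h4⟩ | ⟨h4, _⟩
    · linarith
    · linarith
  -- step A : from f1 at index n to f2 at n+1 and f3 at n+2
  have stepA : ∀ (n m : ℕ),
      GenContFract.IntFractPair.stream α n
        = some ⟨2*(s:ℤ)-1, J S (m+1) (m+1) / (((m:ℝ)+1) * J S m (m+1))⟩ →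
      (GenContFract.IntFractPair.stream α (n+1)
        = some ⟨2*((m:ℤ)+1),
            (S * J S (m+1) (m+1) - J S (m+1) (m+2)) / (S * J S (m+1) (m+1))⟩) ∧
      (GenContFract.IntFractPair.stream α (n+2)
        = some ⟨1, J S (m+1) (m+2) / (S * J S (m+1) (m+1) - J S (m+1) (m+2))⟩) := by
    intro n m hn
    have hbpos : 0 < J S (m+1) (m+1) := hw m
    have hapos : 0 < J S m (m+1) := hu m
    have hcpos : 0 < J S (m+1) (m+2) := hc m
    have hden : 0 < S * J S (m+1) (m+1) - J S (m+1) (m+2) := by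
      have := huw m; linarith
    have hf1pos : 0 < J S (m+1) (m+1) / (((m:ℝ)+1) * J S m (m+1)) := by
      apply div_pos hbpos
      have : (0:ℝ) < (m:ℝ)+1 := by positivity
      positivity
    have h1 := GenContFract.IntFractPair.stream_succ_of_some hn (ne_of_gt hf1pos)
    have hinv1 : (J S (m+1) (m+1) / (((m:ℝ)+1) * J S m (m+1)))⁻¹
        = ((2*((m:ℤ)+1) : ℤ) : ℝ)
          + (S * J S (m+1) (m+1) - J S (m+1) (m+2)) / (S * J S (m+1) (m+1)) := by
      rw [inv_div]
      push_cast
      have hbne : ((m:ℝ)+1) * J S m (m+1) ≠ 0 := by positivity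
      have hSbne : S * J S (m+1) (m+1) ≠ 0 := by positivity
      rw [add_div' _ _ _ hSbne, div_eq_div_iff (ne_of_gt hbpos) hSbne]
      linear_combination (J S (m+1) (m+1)) * hU m
    have hf2pos : 0 < (S * J S (m+1) (m+1) - J S (m+1) (m+2)) / (S * J S (m+1) (m+1)) := by
      apply div_pos hden (by positivity)
    have hf2lt : (S * J S (m+1) (m+1) - J S (m+1) (m+2)) / (S * J S (m+1) (m+1)) < 1 := by
      rw [div_lt_one (by positivity)]
      linarith
    have hof1 : GenContFract.IntFractPair.of
        (J S (m+1) (m+1) / (((m:ℝ)+1) * J S m (m+1)))⁻¹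
        = ⟨2*((m:ℤ)+1),
            (S * J S (m+1) (m+1) - J S (m+1) (m+2)) / (S * J S (m+1) (m+1))⟩ :=
      of_eq _ _ _ hinv1 hf2pos hf2lt
    have h1' : GenContFract.IntFractPair.stream α (n+1)
        = some (GenContFract.IntFractPair.of
          (J S (m+1) (m+1) / (((m:ℝ)+1) * J S m (m+1)))⁻¹) := h1
    rw [hof1] at h1'
    refine ⟨h1', ?_⟩
    have h2 := GenContFract.IntFractPair.stream_succ_of_some h1' (ne_of_gt hf2pos)
    have hinv2 : ((S * J S (m+1) (m+1) - J S (m+1) (m+2)) / (S * J S (m+1) (m+1)))⁻¹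
        = ((1 : ℤ) : ℝ)
          + J S (m+1) (m+2) / (S * J S (m+1) (m+1) - J S (m+1) (m+2)) := by
      rw [inv_div]
      push_cast
      have hdne : S * J S (m+1) (m+1) - J S (m+1) (m+2) ≠ 0 := ne_of_gt hden
      have hSbne : S * J S (m+1) (m+1) ≠ 0 := by positivity
      rw [add_div' _ _ _ hdne, div_eq_div_iff hdne hdne]
      ring
    have hf3pos : 0 < J S (m+1) (m+2) / (S * J S (m+1) (m+1) - J S (m+1) (m+2)) :=
      div_pos hcpos hden
    have hf3lt : J S (m+1) (m+2) / (S * J S (m+1) (m+1) - J S (m+1) (m+2)) < 1 := by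
      rw [div_lt_one hden]
      have hb : J S (m+1) (m+1) ≤ S * J S (m+1) (m+1) :=
        le_mul_of_one_le_left hbpos.le hS1
      have := h2c m
      linarith
    have hof2 : GenContFract.IntFractPair.of
        ((S * J S (m+1) (m+1) - J S (m+1) (m+2)) / (S * J S (m+1) (m+1)))⁻¹
        = ⟨1, J S (m+1) (m+2) / (S * J S (m+1) (m+1) - J S (m+1) (m+2))⟩ :=
      of_eq _ _ _ hinv2 hf3pos hf3lt
    have h2' : GenContFract.IntFractPair.stream α (n+2)
        = some (GenContFract.IntFractPair.of
          ((S * J S (m+1) (m+1) - J S (m+1) (m+2)) / (S * J S (m+1) (m+1)))⁻¹) := h2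
    rw [hof2] at h2'
    exact h2'
  -- step B : from f3 at index n to f1 (m+1) at n+1
  have stepB : ∀ (n m : ℕ),
      GenContFract.IntFractPair.stream α n
        = some ⟨1, J S (m+1) (m+2) / (S * J S (m+1) (m+1) - J S (m+1) (m+2))⟩ →
      GenContFract.IntFractPair.stream α (n+1)
        = some ⟨2*(s:ℤ)-1,
            J S (m+2) (m+2) / (((m:ℝ)+2) * J S (m+1) (m+2))⟩ := by
    intro n m hn
    have hbpos : 0 < J S (m+1) (m+1) := hw m
    have hcpos : 0 < J S (m+1) (m+2) := hc m
    have hdpos : 0 < J S (m+2) (m+2) := hw (m+1)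
    have hden : 0 < S * J S (m+1) (m+1) - J S (m+1) (m+2) := by
      have := huw m; linarith
    have hf3pos : 0 < J S (m+1) (m+2) / (S * J S (m+1) (m+1) - J S (m+1) (m+2)) :=
      div_pos hcpos hden
    have h1 := GenContFract.IntFractPair.stream_succ_of_some hn (ne_of_gt hf3pos)
    have hinv : (J S (m+1) (m+2) / (S * J S (m+1) (m+1) - J S (m+1) (m+2)))⁻¹
        = ((2*(s:ℤ)-1 : ℤ) : ℝ)
          + J S (m+2) (m+2) / (((m:ℝ)+2) * J S (m+1) (m+2)) := by
      rw [inv_div]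
      push_cast
      rw [← hSdef]
      have hcne : J S (m+1) (m+2) ≠ 0 := ne_of_gt hcpos
      have hDne : ((m:ℝ)+2) * J S (m+1) (m+2) ≠ 0 := by positivity
      rw [add_div' _ _ _ hDne, div_eq_div_iff hcne hDne]
      linear_combination (-(J S (m+1) (m+2))) * hW m
    have hf4pos : 0 < J S (m+2) (m+2) / (((m:ℝ)+2) * J S (m+1) (m+2)) := by
      apply div_pos hdpos
      have : (0:ℝ) < (m:ℝ)+2 := by positivity
      positivity
    have hf4lt : J S (m+2) (m+2) / (((m:ℝ)+2) * J S (m+1) (m+2)) < 1 := by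
      rw [div_lt_one (by positivity)]
      have h5 : J S (m+2) (m+2) < (((m+1:ℕ):ℝ)+1) * J S (m+1) (m+2) := hwu (m+1)
      push_cast at h5
      linarith
    have hof : GenContFract.IntFractPair.of
        (J S (m+1) (m+2) / (S * J S (m+1) (m+1) - J S (m+1) (m+2)))⁻¹
        = ⟨2*(s:ℤ)-1, J S (m+2) (m+2) / (((m:ℝ)+2) * J S (m+1) (m+2))⟩ :=
      of_eq _ _ _ hinv hf4pos hf4lt
    have h1' : GenContFract.IntFractPair.stream α (n+1)
        = some (GenContFract.IntFractPair.of
          (J S (m+1) (m+2) / (S * J S (m+1) (m+1) - J S (m+1) (m+2)))⁻¹) := h1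
    rw [hof] at h1'
    exact h1'
  -- base computation
  have e1 : J S 0 0 = S * Real.exp (1 / S) - S := J00 S hSne
  have e2 : J S 1 0 = (S - S^2) * Real.exp (1 / S) + S^2 := J10 S hSne
  have e3 : J S 0 1 = J S 0 0 - J S 1 0 := Jsplit S 0 0
  have e4 : J S 1 1 = S * ((0:ℝ)+1) * (J S 1 0 - J S 0 1) := by
    have := I1 S hSne 0
    push_cast at this
    convert this using 2 <;> norm_num
  have hu0 : J S 0 1 = S * α - S^2 - S := by
    rw [e3, e1, e2, hαdef]; ring
  have hKey : (2*S - 1) * J S 0 1 + J S 1 1 = S := by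
    rw [e4, e3, e1, e2]; ring
  have hu0pos : 0 < J S 0 1 := hu 0
  have hu0lt : J S 0 1 < S := Ilt3 S hS1
  have hfr0pos : 0 < J S 0 1 / S := div_pos hu0pos hS0
  have hfr0lt : J S 0 1 / S < 1 := by rw [div_lt_one hS0]; exact hu0lt
  have hα0 : α = (((s:ℤ)+1 : ℤ) : ℝ) + J S 0 1 / S := by
    have hq : J S 0 1 / S = α - (S+1) := by
      rw [hu0]
      field_simp
      ring
    rw [hq]
    push_cast
    rw [← hSdef]
    ring
  have hof0 : GenContFract.IntFractPair.of α = ⟨(s:ℤ)+1, J S 0 1 / S⟩ :=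
    of_eq _ _ _ hα0 hfr0pos hfr0lt
  have hstream0 : GenContFract.IntFractPair.stream α 0 = some ⟨(s:ℤ)+1, J S 0 1 / S⟩ := by
    rw [GenContFract.IntFractPair.stream_zero, hof0]
  have hstream1 : GenContFract.IntFractPair.stream α 1
      = some ⟨2*(s:ℤ)-1, J S 1 1 / (((((0:ℕ)):ℝ)+1) * J S 0 1)⟩ := by
    have h1 := GenContFract.IntFractPair.stream_succ_of_some hstream0 (ne_of_gt hfr0pos)
    have hinv : ((J S 0 1 / S)⁻¹ : ℝ)
        = ((2*(s:ℤ)-1 : ℤ) : ℝ) + J S 1 1 / (((((0:ℕ)):ℝ)+1) * J S 0 1) := by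
      rw [inv_div]
      push_cast
      rw [← hSdef]
      have hu0ne : J S 0 1 ≠ 0 := ne_of_gt hu0pos
      have hDne : ((0:ℝ)+1) * J S 0 1 ≠ 0 := by positivity
      rw [add_div' _ _ _ hDne, div_eq_div_iff hu0ne hDne]
      linear_combination (-(J S 0 1)) * hKey
    have hf1pos : 0 < J S 1 1 / (((((0:ℕ)):ℝ)+1) * J S 0 1) := by
      apply div_pos (hw 0)
      have h9 : (0:ℝ) < J S 0 1 := hu 0
      positivity
    have hf1lt : J S 1 1 / (((((0:ℕ)):ℝ)+1) * J S 0 1) < 1 := by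
      rw [div_lt_one (by positivity)]
      exact hwu 0
    have hof := of_eq _ _ _ hinv hf1pos hf1lt
    have h1' : GenContFract.IntFractPair.stream α 1
        = some (GenContFract.IntFractPair.of (J S 0 1 / S)⁻¹) := h1
    rw [hof] at h1'
    exact h1'
  -- induction
  induction k with
  | zero =>
    have hA := stepA 1 0 hstream1
    exact ⟨hstream1, hA.1, hA.2⟩
  | succ k ih =>
    have hB := stepB (3*k+3) k ih.2.2
    have hidx : 3*k+3+1 = 3*(k+1)+1 := by ring
    rw [hidx] at hB
    have hcast : ((k:ℝ)+2) = (((k+1:ℕ)):ℝ)+1 := by push_cast; ring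
    rw [hcast] at hB
    have hA := stepA (3*(k+1)+1) (k+1) hB
    exact ⟨hB, hA.1, hA.2⟩

lemma floor_alpha (s : ℕ) (hs : 1 ≤ s) :
    ⌊(s:ℝ) * Real.exp (1 / (s:ℝ))⌋ = (s:ℤ)+1 := by
  set S : ℝ := (s : ℝ) with hSdef
  have hS1 : (1:ℝ) ≤ S := by rw [hSdef]; exact_mod_cast hs
  have hS0 : (0:ℝ) < S := by linarith
  have hSne : S ≠ 0 := ne_of_gt hS0
  have e1 : J S 0 0 = S * Real.exp (1 / S) - S := J00 S hSne
  have e2 : J S 1 0 = (S - S^2) * Real.exp (1 / S) + S^2 := J10 S hSne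
  have e3 : J S 0 1 = J S 0 0 - J S 1 0 := Jsplit S 0 0
  have hu0 : J S 0 1 = S * (S * Real.exp (1 / S)) - S^2 - S := by
    rw [e3, e1, e2]; ring
  have hu0pos : 0 < J S 0 1 := Jpos S 0 1
  have hu0lt : J S 0 1 < S := Ilt3 S hS1
  rw [Int.floor_eq_iff]
  constructor
  · push_cast
    rw [← hSdef]
    nlinarith [hu0]
  · push_cast
    rw [← hSdef]
    nlinarith [hu0]

end SExpCF

theorem contFract_of_s_exp_one_div_s (s : ℕ) (hs : 1 ≤ s) :
    let α : ℝ := (s : ℝ) * Real.exp (1 / (s : ℝ))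
    (GenContFract.of α).h = (s : ℝ) + 1 ∧
      ∀ k : ℕ,
        (GenContFract.of α).partDens.get? (3 * k) = some (2 * (s : ℝ) - 1) ∧
        (GenContFract.of α).partDens.get? (3 * k + 1) = some (2 * ((k : ℝ) + 1)) ∧
        (GenContFract.of α).partDens.get? (3 * k + 2) = some 1 := by
  intro α
  have hα : α = (s:ℝ) * Real.exp (1 / (s:ℝ)) := rfl
  constructor
  · rw [GenContFract.of_h_eq_floor, hα, SExpCF.floor_alpha s hs]
    push_cast
    ring
  · intro k
    obtain ⟨h1, h2, h3⟩ := SExpCF.stream_spec s hs k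
    rw [← hα] at h1 h2 h3
    refine ⟨?_, ?_, ?_⟩
    · have hg := GenContFract.get?_of_eq_some_of_succ_get?_intFractPair_stream h1
      have hb := GenContFract.partDen_eq_s_b hg
      rw [hb]
      simp only [Option.some.injEq]
      push_cast
      ring
    · have hg := GenContFract.get?_of_eq_some_of_succ_get?_intFractPair_stream h2
      have hb := GenContFract.partDen_eq_s_b hg
      rw [hb]
      simp only [Option.some.injEq]
      push_cast
      ring
    · have hg := GenContFract.get?_of_eq_some_of_succ_get?_intFractPair_stream h3
      have hb := GenContFract.partDen_eq_s_b hg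
      rw [hb]
      simp only [Option.some.injEq]
      push_cast
      ring
end
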